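/- arXiv:1809.00943 — 2 statements merged into one kernel-verified Lean document; each statement's English description precedes it below -/
import Mathlib

section
/- The class of all symmetric Kripke models (Kripke models whose accessibility relation ≺ is symmetric) has ULIP. -/
/-- Modal formulas: propositional variables, ⊥, →, □. -/
inductive Formula : Type
  | var : ℕ → Formula
  | bot : Formula
  | imp : Formula → Formula → Formula
  | box : Formula → Formula
  deriving DecidableEq

namespace Formula

def neg (φ : Formula) : Formula := φ.imp bot

def top : Formula := neg bot

def and (φ ψ : Formula) : Formula := (φ.imp ψ.neg).neg

def iff (φ ψ : Formula) : Formula := (φ.imp ψ).and (ψ.imp φ)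

def dia (φ : Formula) : Formula := φ.neg.box.neg

/-- Variables occurring positively (`true`) / negatively (`false`). -/
def vsgn : Formula → Bool → Finset ℕ
  | var p, true => {p}
  | var _, false => ∅
  | bot, _ => ∅
  | imp φ ψ, b => vsgn φ (!b) ∪ vsgn ψ b
  | box φ, b => vsgn φ b

def vpos (φ : Formula) : Finset ℕ := vsgn φ true
def vneg (φ : Formula) : Finset ℕ := vsgn φ false
def vars (φ : Formula) : Finset ℕ := vpos φ ∪ vneg φ

/-- Modal depth. -/
def depth : Formula → ℕ
  | var _ => 0
  | bot => 0
  | imp φ ψ => max (depth φ) (depth ψ)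
  | box φ => depth φ + 1

/-- Uniform substitution. -/
def subst (σ : ℕ → Formula) : Formula → Formula
  | var p => σ p
  | bot => bot
  | imp φ ψ => (subst σ φ).imp (subst σ ψ)
  | box φ => (subst σ φ).box

/-- The set of subformulas. -/
def subfmls : Formula → Finset Formula
  | var p => {var p}
  | bot => {bot}
  | imp φ ψ => insert (imp φ ψ) (subfmls φ ∪ subfmls ψ)
  | box φ => insert (box φ) (subfmls φ)

/-- n(φ) = |{ψ : □ψ ∈ Sub(φ)}|. -/
def boxCount (φ : Formula) : ℕ :=
  ((subfmls φ).filter fun ψ => box ψ ∈ subfmls φ).card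

/-- The translation ⋆ : p⋆ = p, ⊥⋆ = ⊥, (φ→ψ)⋆ = φ⋆→ψ⋆, (□φ)⋆ = φ⋆ ∧ □φ⋆. -/
def star : Formula → Formula
  | var p => var p
  | bot => bot
  | imp φ ψ => (star φ).imp (star ψ)
  | box φ => (star φ).and (star φ).box

end Formula

/-- Propositional tautology: true under every valuation treating variables and
boxed formulas as atoms. -/
def Tautology (φ : Formula) : Prop :=
  ∀ v : Formula → Bool, v .bot = false →
    (∀ ψ θ : Formula, v (ψ.imp θ) = (!v ψ || v θ)) → v φ = true

/-- A normal modal logic: contains all tautologies and □(p→q)→(□p→□q), and is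
closed under modus ponens, necessitation and uniform substitution. -/
structure IsNormal (L : Set Formula) : Prop where
  taut : ∀ φ, Tautology φ → φ ∈ L
  axK : ((Formula.var 0).imp (Formula.var 1)).box.imp
      ((Formula.var 0).box.imp (Formula.var 1).box) ∈ L
  mp : ∀ φ ψ : Formula, φ.imp ψ ∈ L → φ ∈ L → ψ ∈ L
  nec : ∀ φ : Formula, φ ∈ L → φ.box ∈ L
  subst_mem : ∀ φ ∈ L, ∀ σ : ℕ → Formula, Formula.subst σ φ ∈ L

/-- The least normal modal logic including `X`. -/
def NormalExt (X : Set Formula) : Set Formula :=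
  ⋂₀ {L : Set Formula | IsNormal L ∧ X ⊆ L}

/-- The least normal modal logic K. -/
def TheoryK : Set Formula := NormalExt ∅

def axT : Formula := (Formula.var 0).box.imp (Formula.var 0)
def ax4 : Formula := (Formula.var 0).box.imp (Formula.var 0).box.box
def axB : Formula := (Formula.var 0).imp (Formula.var 0).dia.box
def axD : Formula := Formula.bot.box.neg
def axGL : Formula := ((Formula.var 0).box.imp (Formula.var 0)).box.imp (Formula.var 0).box
def axGrz : Formula :=
  (((Formula.var 0).imp (Formula.var 0).box).box.imp (Formula.var 0)).box.imp (Formula.var 0)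

def TheoryKD : Set Formula := NormalExt {axD}
def TheoryKT : Set Formula := NormalExt {axT}
def TheoryKB : Set Formula := NormalExt {axB}
def TheoryKDB : Set Formula := NormalExt {axD, axB}
def TheoryKTB : Set Formula := NormalExt {axT, axB}
def TheoryK4 : Set Formula := NormalExt {ax4}
def TheoryS4 : Set Formula := NormalExt {axT, ax4}
def TheoryGL : Set Formula := NormalExt {axGL}
def TheoryGrz : Set Formula := NormalExt {axGrz}

/-- L⋆ := {φ : L ⊢ φ⋆}. -/
def starLogic (L : Set Formula) : Set Formula := {φ | Formula.star φ ∈ L}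

/-- θ is a uniform Lyndon interpolant of (φ, P, Q) in L. -/
def IsULInterpolant (L : Set Formula) (φ : Formula) (P Q : Finset ℕ) (θ : Formula) : Prop :=
  θ.vpos ⊆ φ.vpos \ P ∧ θ.vneg ⊆ φ.vneg \ Q ∧ φ.imp θ ∈ L ∧
    ∀ ψ : Formula, ψ.vpos ∩ P = ∅ → ψ.vneg ∩ Q = ∅ → φ.imp ψ ∈ L → θ.imp ψ ∈ L

/-- The uniform Lyndon interpolation property. -/
def ULIP (L : Set Formula) : Prop :=
  ∀ (φ : Formula) (P Q : Finset ℕ), ∃ θ : Formula, IsULInterpolant L φ P Q θ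

/-- The uniform interpolation property. -/
def UIP (L : Set Formula) : Prop :=
  ∀ (φ : Formula) (P : Finset ℕ), ∃ θ : Formula,
    θ.vars ⊆ φ.vars \ P ∧ φ.imp θ ∈ L ∧
      ∀ ψ : Formula, ψ.vars ∩ P = ∅ → φ.imp ψ ∈ L → θ.imp ψ ∈ L

/-- The Lyndon interpolation property. -/
def LIP (L : Set Formula) : Prop :=
  ∀ φ ψ : Formula, φ.imp ψ ∈ L → ∃ θ : Formula,
    θ.vpos ⊆ φ.vpos ∩ ψ.vpos ∧ θ.vneg ⊆ φ.vneg ∩ ψ.vneg ∧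
      φ.imp θ ∈ L ∧ θ.imp ψ ∈ L

/-- A Kripke model. -/
structure KripkeModel where
  W : Type
  nonempty : Nonempty W
  rel : W → W → Prop
  val : W → ℕ → Prop

/-- Satisfaction in a Kripke model. -/
def KripkeModel.Sat (M : KripkeModel) : Formula → M.W → Prop
  | .var p, w => M.val w p
  | .bot, _ => False
  | .imp φ ψ, w => M.Sat φ w → M.Sat ψ w
  | .box φ, w => ∀ x, M.rel w x → M.Sat φ x

/-- A (P,Q)-formula: v⁺(φ) ⊆ P and v⁻(φ) ⊆ Q. -/
def PQFormula (P Q : Finset ℕ) (φ : Formula) : Prop := φ.vpos ⊆ P ∧ φ.vneg ⊆ Q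

/-- `F n P Q` is a finite list of (P,Q)-formulas of modal depth ≤ n such that every
(P,Q)-formula of modal depth ≤ n is K-provably equivalent to some member. -/
def IsFamily (F : ℕ → Finset ℕ → Finset ℕ → List Formula) : Prop :=
  ∀ (n : ℕ) (P Q : Finset ℕ),
    (∀ φ ∈ F n P Q, PQFormula P Q φ ∧ φ.depth ≤ n) ∧
    ∀ ψ : Formula, PQFormula P Q ψ → ψ.depth ≤ n →
      ∃ φ ∈ F n P Q, Formula.iff φ ψ ∈ TheoryK

/-- Th_n^{(P,Q)}(w) = {φ ∈ F_n^{(P,Q)} : w ⊩ φ}. -/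
def Th (F : ℕ → Finset ℕ → Finset ℕ → List Formula) (M : KripkeModel)
    (n : ℕ) (P Q : Finset ℕ) (w : M.W) : Set Formula :=
  {φ | φ ∈ F n P Q ∧ M.Sat φ w}

def conjList : List Formula → Formula
  | [] => Formula.top
  | φ :: l => φ.and (conjList l)

open Classical in
/-- C_n^{(P,Q)}(w) = ⋀ Th_n^{(P,Q)}(w). -/
noncomputable def Cfml (F : ℕ → Finset ℕ → Finset ℕ → List Formula) (M : KripkeModel)
    (n : ℕ) (P Q : Finset ℕ) (w : M.W) : Formula :=
  conjList ((F n P Q).filter fun φ => decide (M.Sat φ w))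

/-- Layered (P,Q)-bisimulation between M and M'. -/
def LayeredBisim (P Q : Finset ℕ) (M M' : KripkeModel)
    (Z : M.W → ℕ → M'.W → Prop) : Prop :=
  (∀ w n w', Z w n w' →
    (∀ p ∈ P, M.val w p → M'.val w' p) ∧ (∀ q ∈ Q, ¬M.val w q → ¬M'.val w' q)) ∧
  (∀ w n w', Z w (n + 1) w' → ∀ x, M.rel w x → ∃ x', M'.rel w' x' ∧ Z x n x') ∧
  (∀ w n w', Z w (n + 1) w' → ∀ x', M'.rel w' x' → ∃ x, M.rel w x ∧ Z x n x')

/-- Downward closedness of a layered bisimulation. -/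
def DownClosed (M M' : KripkeModel) (Z : M.W → ℕ → M'.W → Prop) : Prop :=
  ∀ w n w', Z w n w' → ∀ m ≤ n, Z w m w'

/-- A class of Kripke models has ULIP. -/
def ClassULIP (F : ℕ → Finset ℕ → Finset ℕ → List Formula) (Cl : Set KripkeModel) : Prop :=
  ∀ P1 P2 P3 Q1 Q2 Q3 : Finset ℕ,
    Disjoint P1 P2 → Disjoint P1 P3 → Disjoint P2 P3 →
    Disjoint Q1 Q2 → Disjoint Q1 Q3 → Disjoint Q2 Q3 →
    ∀ M : KripkeModel, M ∈ Cl → ∀ M' : KripkeModel, M' ∈ Cl →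
    ∀ w : M.W, ∀ w' : M'.W, ∀ m n : ℕ,
      Th F M n P2 Q2 w ⊆ Th F M' n P2 Q2 w' →
      ∃ Mst : KripkeModel, Mst ∈ Cl ∧ ∃ wst : Mst.W,
        Th F M n (P1 ∪ P2) (Q1 ∪ Q2) w ⊆ Th F Mst n (P1 ∪ P2) (Q1 ∪ Q2) wst ∧
        Th F Mst m (P2 ∪ P3) (Q2 ∪ Q3) wst ⊆ Th F M' m (P2 ∪ P3) (Q2 ∪ Q3) w'

section ULIPAux

open Classical

/-- Validity in all Kripke models. -/
def ValidF (φ : Formula) : Prop := ∀ (M : KripkeModel) (w : M.W), M.Sat φ w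

def KripkeModel.relabel (M : KripkeModel) (σ : ℕ → Formula) : KripkeModel :=
  ⟨M.W, M.nonempty, M.rel, fun w p => M.Sat (σ p) w⟩

lemma sat_subst (σ : ℕ → Formula) (M : KripkeModel) :
    ∀ (φ : Formula) (w : M.W), M.Sat (φ.subst σ) w ↔ (M.relabel σ).Sat φ w := by
  intro φ
  induction φ with
  | var p => intro w; rfl
  | bot => intro w; rfl
  | imp φ ψ ihφ ihψ =>
      intro w
      show (M.Sat (φ.subst σ) w → M.Sat (ψ.subst σ) w) ↔ _
      rw [ihφ, ihψ]; rfl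
  | box φ ih =>
      intro w
      show (∀ x, M.rel w x → M.Sat (φ.subst σ) x) ↔ _
      constructor
      · intro h x hx; exact (ih x).mp (h x hx)
      · intro h x hx; exact (ih x).mpr (h x hx)

lemma isNormal_valid : IsNormal {φ | ValidF φ} := by
  constructor
  · intro φ hφ M w
    have := hφ (fun ψ => decide (M.Sat ψ w))
      (by simp [show M.Sat .bot w ↔ False from Iff.rfl])
      (by
        intro ψ θ
        by_cases h1 : M.Sat ψ w <;> by_cases h2 : M.Sat θ w <;>
          simp [h1, h2, show M.Sat (ψ.imp θ) w ↔ (M.Sat ψ w → M.Sat θ w) from Iff.rfl])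
    exact of_decide_eq_true this
  · intro M w h1 h2 x hx
    exact h1 x hx (h2 x hx)
  · intro φ ψ h1 h2 M w
    exact h1 M w (h2 M w)
  · intro φ h M w x hx
    exact h M x
  · intro φ h σ M w
    exact (sat_subst σ M φ w).mpr (h (M.relabel σ) w)

lemma theoryK_valid {φ : Formula} (h : φ ∈ TheoryK) : ValidF φ :=
  h {φ | ValidF φ} ⟨isNormal_valid, Set.empty_subset _⟩

lemma sat_neg {M : KripkeModel} {φ : Formula} {w : M.W} :
    M.Sat φ.neg w ↔ ¬ M.Sat φ w := by
  show (M.Sat φ w → False) ↔ _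
  tauto

lemma sat_and {M : KripkeModel} {φ ψ : Formula} {w : M.W} :
    M.Sat (φ.and ψ) w ↔ M.Sat φ w ∧ M.Sat ψ w := by
  show ((M.Sat φ w → (M.Sat ψ w → False)) → False) ↔ _
  tauto

lemma sat_iff_of_K {φ ψ : Formula} (h : Formula.iff φ ψ ∈ TheoryK)
    (M : KripkeModel) (w : M.W) : M.Sat φ w ↔ M.Sat ψ w := by
  have := theoryK_valid h M w
  rw [Formula.iff, sat_and] at this
  exact ⟨this.1, this.2⟩

end ULIPAux
section ULIPAux2

open Classical Formula

lemma vsgn_neg (φ : Formula) (b : Bool) : (φ.neg).vsgn b = φ.vsgn (!b) := by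
  show φ.vsgn (!b) ∪ Formula.bot.vsgn b = _
  cases b <;> simp [Formula.vsgn]

lemma vsgn_and (φ ψ : Formula) (b : Bool) :
    (φ.and ψ).vsgn b = φ.vsgn b ∪ ψ.vsgn b := by
  show ((φ.imp ψ.neg).neg).vsgn b = _
  rw [vsgn_neg]
  show φ.vsgn (! !b) ∪ (ψ.neg).vsgn (!b) = _
  rw [vsgn_neg]
  simp

lemma vsgn_dia (φ : Formula) (b : Bool) : (φ.dia).vsgn b = φ.vsgn b := by
  show ((φ.neg.box).neg).vsgn b = _
  rw [vsgn_neg]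
  show (φ.neg).vsgn (!b) = _
  rw [vsgn_neg]
  simp

lemma vsgn_top (b : Bool) : Formula.top.vsgn b = ∅ := by
  rw [Formula.top, vsgn_neg]; cases b <;> rfl

lemma depth_neg (φ : Formula) : φ.neg.depth = φ.depth := by
  show max φ.depth 0 = _; simp [Formula.depth]

lemma depth_and (φ ψ : Formula) : (φ.and ψ).depth = max φ.depth ψ.depth := by
  show max (max φ.depth (max ψ.depth 0)) 0 = _; simp [Formula.depth]

lemma depth_dia (φ : Formula) : φ.dia.depth = φ.depth + 1 := by
  show max ((max φ.depth 0) + 1) 0 = _; simp [Formula.depth]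

lemma depth_top : Formula.top.depth = 0 := rfl

/-- Disjunction and disjunction lists. -/
def Formula.or (φ ψ : Formula) : Formula := φ.neg.imp ψ

def disjList : List Formula → Formula
  | [] => Formula.bot
  | φ :: l => φ.or (disjList l)

lemma vsgn_or (φ ψ : Formula) (b : Bool) :
    (Formula.or φ ψ).vsgn b = φ.vsgn b ∪ ψ.vsgn b := by
  show (φ.neg).vsgn (!b) ∪ ψ.vsgn b = _
  rw [vsgn_neg]; simp

lemma depth_or (φ ψ : Formula) : (Formula.or φ ψ).depth = max φ.depth ψ.depth := by
  show max φ.neg.depth ψ.depth = _; rw [depth_neg]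

lemma sat_or {M : KripkeModel} {φ ψ : Formula} {w : M.W} :
    M.Sat (Formula.or φ ψ) w ↔ M.Sat φ w ∨ M.Sat ψ w := by
  show (M.Sat φ.neg w → M.Sat ψ w) ↔ _
  rw [sat_neg]; tauto

lemma sat_dia {M : KripkeModel} {φ : Formula} {w : M.W} :
    M.Sat φ.dia w ↔ ∃ x, M.rel w x ∧ M.Sat φ x := by
  show M.Sat (φ.neg.box).neg w ↔ _
  rw [sat_neg]
  show ¬ (∀ x, M.rel w x → M.Sat φ.neg x) ↔ _
  push_neg
  constructor
  · rintro ⟨x, hx, hs⟩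
    rw [sat_neg, not_not] at hs
    exact ⟨x, hx, hs⟩
  · rintro ⟨x, hx, hs⟩
    exact ⟨x, hx, by rw [sat_neg, not_not]; exact hs⟩

lemma sat_conjList {M : KripkeModel} {w : M.W} :
    ∀ l : List Formula, M.Sat (conjList l) w ↔ ∀ φ ∈ l, M.Sat φ w := by
  intro l
  induction l with
  | nil =>
      constructor
      · intro _ φ hφ; simp at hφ
      · intro _
        show M.Sat Formula.top w
        rw [Formula.top, sat_neg]
        exact fun h => h
  | cons φ l ih =>
      show M.Sat (φ.and (conjList l)) w ↔ _
      rw [sat_and, ih]; simp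

lemma sat_disjList {M : KripkeModel} {w : M.W} :
    ∀ l : List Formula, M.Sat (disjList l) w ↔ ∃ φ ∈ l, M.Sat φ w := by
  intro l
  induction l with
  | nil => show False ↔ _; simp
  | cons φ l ih =>
      show M.Sat (Formula.or φ (disjList l)) w ↔ _
      rw [sat_or, ih]; simp

lemma pq_conjList {P Q : Finset ℕ} :
    ∀ l : List Formula, (∀ φ ∈ l, PQFormula P Q φ) → PQFormula P Q (conjList l) := by
  intro l
  induction l with
  | nil =>
      intro _
      constructor
      · show Formula.top.vsgn true ⊆ P
        rw [vsgn_top]; simp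
      · show Formula.top.vsgn false ⊆ Q
        rw [vsgn_top]; simp
  | cons φ l ih =>
      intro h
      obtain ⟨h1, h2⟩ := h φ (by simp)
      obtain ⟨h3, h4⟩ := ih (fun ψ hψ => h ψ (by simp [hψ]))
      constructor
      · show (φ.and (conjList l)).vsgn true ⊆ P
        rw [vsgn_and]; exact Finset.union_subset h1 h3
      · show (φ.and (conjList l)).vsgn false ⊆ Q
        rw [vsgn_and]; exact Finset.union_subset h2 h4

lemma pq_disjList {P Q : Finset ℕ} :
    ∀ l : List Formula, (∀ φ ∈ l, PQFormula P Q φ) → PQFormula P Q (disjList l) := by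
  intro l
  induction l with
  | nil =>
      intro _
      constructor
      · show Formula.bot.vsgn true ⊆ P; simp [Formula.vsgn]
      · show Formula.bot.vsgn false ⊆ Q; simp [Formula.vsgn]
  | cons φ l ih =>
      intro h
      obtain ⟨h1, h2⟩ := h φ (by simp)
      obtain ⟨h3, h4⟩ := ih (fun ψ hψ => h ψ (by simp [hψ]))
      constructor
      · show (Formula.or φ (disjList l)).vsgn true ⊆ P
        rw [vsgn_or]; exact Finset.union_subset h1 h3
      · show (Formula.or φ (disjList l)).vsgn false ⊆ Q
        rw [vsgn_or]; exact Finset.union_subset h2 h4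

lemma depth_conjList {n : ℕ} :
    ∀ l : List Formula, (∀ φ ∈ l, φ.depth ≤ n) → (conjList l).depth ≤ n := by
  intro l
  induction l with
  | nil => intro _; show Formula.top.depth ≤ n; rw [depth_top]; exact Nat.zero_le n
  | cons φ l ih =>
      intro h
      show (φ.and (conjList l)).depth ≤ n
      rw [depth_and]
      exact max_le (h φ (by simp)) (ih fun ψ hψ => h ψ (by simp [hψ]))

lemma depth_disjList {n : ℕ} :
    ∀ l : List Formula, (∀ φ ∈ l, φ.depth ≤ n) → (disjList l).depth ≤ n := by
  intro l
  induction l with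
  | nil => intro _; exact Nat.zero_le n
  | cons φ l ih =>
      intro h
      show (Formula.or φ (disjList l)).depth ≤ n
      rw [depth_or]
      exact max_le (h φ (by simp)) (ih fun ψ hψ => h ψ (by simp [hψ]))

end ULIPAux2
section ULIPAux3

open Classical Formula

/-- Inclusion of bounded (P,Q)-theories (over all formulas, not just the family). -/
def Incl (P Q : Finset ℕ) (M M' : KripkeModel) (x : M.W) (k : ℕ) (x' : M'.W) : Prop :=
  ∀ φ : Formula, PQFormula P Q φ → φ.depth ≤ k → M.Sat φ x → M'.Sat φ x'

lemma incl_refl {P Q : Finset ℕ} {M : KripkeModel} (x : M.W) (k : ℕ) :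
    Incl P Q M M x k x := fun _ _ _ h => h

lemma incl_var {P Q : Finset ℕ} {M M' : KripkeModel} {x : M.W} {k : ℕ} {x' : M'.W}
    (h : Incl P Q M M' x k x') {p : ℕ} (hp : p ∈ P) (hv : M.val x p) : M'.val x' p := by
  have := h (Formula.var p)
    ⟨by show ({p} : Finset ℕ) ⊆ P; simpa using hp, by show (∅ : Finset ℕ) ⊆ Q; simp⟩
    (Nat.zero_le k) hv
  exact this

lemma incl_nvar {P Q : Finset ℕ} {M M' : KripkeModel} {x : M.W} {k : ℕ} {x' : M'.W}
    (h : Incl P Q M M' x k x') {q : ℕ} (hq : q ∈ Q) (hv : ¬ M.val x q) : ¬ M'.val x' q := by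
  have := h (Formula.var q).neg
    ⟨by show ((Formula.var q).neg).vsgn true ⊆ P; rw [vsgn_neg]; show (∅:Finset ℕ) ⊆ P; simp,
     by show ((Formula.var q).neg).vsgn false ⊆ Q; rw [vsgn_neg]
        show ({q} : Finset ℕ) ⊆ Q; simpa using hq⟩
    (by rw [depth_neg]; exact Nat.zero_le k)
    (by rw [sat_neg]; exact hv)
  rw [sat_neg] at this
  exact this

lemma incl_mono {P Q : Finset ℕ} {M M' : KripkeModel} {x : M.W} {k l : ℕ} {x' : M'.W}
    (h : Incl P Q M M' x k x') (hlk : l ≤ k) : Incl P Q M M' x l x' :=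
  fun φ hφ hd => h φ hφ (le_trans hd hlk)

variable {F : ℕ → Finset ℕ → Finset ℕ → List Formula} (hF : IsFamily F)

include hF

lemma incl_forward {P Q : Finset ℕ} {M M' : KripkeModel} {x y : M.W} {k : ℕ} {x' : M'.W}
    (h : Incl P Q M M' x (k + 1) x') (hxy : M.rel x y) :
    ∃ y', M'.rel x' y' ∧ Incl P Q M M' y k y' := by
  set L := (F k P Q).filter (fun φ => decide (M.Sat φ y)) with hL
  set C := conjList L with hC
  have hmem : ∀ φ ∈ L, φ ∈ F k P Q ∧ M.Sat φ y := by
    intro φ hφ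
    rw [hL, List.mem_filter] at hφ
    exact ⟨hφ.1, of_decide_eq_true hφ.2⟩
  have hCpq : PQFormula P Q C :=
    pq_conjList L (fun φ hφ => ((hF k P Q).1 φ (hmem φ hφ).1).1)
  have hCd : C.depth ≤ k :=
    depth_conjList L (fun φ hφ => ((hF k P Q).1 φ (hmem φ hφ).1).2)
  have hsatC : M.Sat C y := (sat_conjList L).mpr (fun φ hφ => (hmem φ hφ).2)
  have hdia : M.Sat C.dia x := sat_dia.mpr ⟨y, hxy, hsatC⟩
  have hdia' : M'.Sat C.dia x' := by
    refine h C.dia ⟨?_, ?_⟩ ?_ hdia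
    · show C.dia.vsgn true ⊆ P; rw [vsgn_dia]; exact hCpq.1
    · show C.dia.vsgn false ⊆ Q; rw [vsgn_dia]; exact hCpq.2
    · rw [depth_dia]; omega
  obtain ⟨y', hy', hsatC'⟩ := sat_dia.mp hdia'
  refine ⟨y', hy', ?_⟩
  intro ψ hψ hd hsy
  obtain ⟨φ, hφF, hiff⟩ := (hF k P Q).2 ψ hψ hd
  have hφy : M.Sat φ y := (sat_iff_of_K hiff M y).mpr hsy
  have hφL : φ ∈ L := by
    rw [hL, List.mem_filter]
    exact ⟨hφF, decide_eq_true hφy⟩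
  have := (sat_conjList L).mp hsatC' φ hφL
  exact (sat_iff_of_K hiff M' y').mp this

lemma incl_backward {P Q : Finset ℕ} {M M' : KripkeModel} {x : M.W} {k : ℕ} {x' y' : M'.W}
    (h : Incl P Q M M' x (k + 1) x') (hxy' : M'.rel x' y') :
    ∃ y, M.rel x y ∧ Incl P Q M M' y k y' := by
  by_contra hcon
  push_neg at hcon
  set S := (F k P Q).filter (fun φ => decide (¬ M'.Sat φ y')) with hS
  set D := disjList S with hD
  have hmem : ∀ φ ∈ S, φ ∈ F k P Q ∧ ¬ M'.Sat φ y' := by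
    intro φ hφ
    rw [hS, List.mem_filter] at hφ
    exact ⟨hφ.1, of_decide_eq_true hφ.2⟩
  have hDpq : PQFormula P Q D :=
    pq_disjList S (fun φ hφ => ((hF k P Q).1 φ (hmem φ hφ).1).1)
  have hDd : D.depth ≤ k :=
    depth_disjList S (fun φ hφ => ((hF k P Q).1 φ (hmem φ hφ).1).2)
  have hbox : M.Sat D.box x := by
    intro y hxy
    have : ¬ Incl P Q M M' y k y' := hcon y hxy
    rw [Incl] at this
    push_neg at this
    obtain ⟨ψ, hψpq, hψd, hψy, hψy'⟩ := this
    obtain ⟨φ, hφF, hiff⟩ := (hF k P Q).2 ψ hψpq hψd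
    have hφy : M.Sat φ y := (sat_iff_of_K hiff M y).mpr hψy
    have hφy' : ¬ M'.Sat φ y' := fun hc => hψy' ((sat_iff_of_K hiff M' y').mp hc)
    have hφS : φ ∈ S := by
      rw [hS, List.mem_filter]
      exact ⟨hφF, decide_eq_true hφy'⟩
    exact (sat_disjList S).mpr ⟨φ, hφS, hφy⟩
  have hbox' : M'.Sat D.box x' := by
    refine h D.box ⟨?_, ?_⟩ ?_ hbox
    · show D.box.vsgn true ⊆ P; exact hDpq.1
    · show D.box.vsgn false ⊆ Q; exact hDpq.2
    · show D.depth + 1 ≤ k + 1; omega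
  have := hbox' y' hxy'
  obtain ⟨φ, hφS, hφy'⟩ := (sat_disjList S).mp this
  exact (hmem φ hφS).2 hφy'

omit hF

/-- Preservation of (P,Q)-formulas along a layered simulation. -/
lemma preservation {P Q : Finset ℕ} {M M' : KripkeModel} {Z : M.W → ℕ → M'.W → Prop}
    (hat : ∀ u k u', Z u k u' →
      (∀ p ∈ P, M.val u p → M'.val u' p) ∧ (∀ q ∈ Q, ¬ M.val u q → ¬ M'.val u' q))
    (hzig : ∀ u k u', Z u (k + 1) u' → ∀ x, M.rel u x → ∃ x', M'.rel u' x' ∧ Z x k x')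
    (hzag : ∀ u k u', Z u (k + 1) u' → ∀ x', M'.rel u' x' → ∃ x, M.rel u x ∧ Z x k x') :
    ∀ (φ : Formula) (n : ℕ) (u : M.W) (u' : M'.W), Z u n u' → φ.depth ≤ n →
      ((φ.vsgn true ⊆ P → φ.vsgn false ⊆ Q → M.Sat φ u → M'.Sat φ u') ∧
       (φ.vsgn true ⊆ Q → φ.vsgn false ⊆ P → M'.Sat φ u' → M.Sat φ u)) := by
  intro φ
  induction φ with
  | var p =>
      intro n u u' hZ _
      constructor
      · intro hp _ hv
        exact (hat u n u' hZ).1 p (hp (by simp [Formula.vsgn])) hv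
      · intro hp _ hv
        by_contra hc
        exact (hat u n u' hZ).2 p (hp (by simp [Formula.vsgn])) hc hv
  | bot =>
      intro n u u' hZ _
      exact ⟨fun _ _ h => h.elim, fun _ _ h => h.elim⟩
  | imp φ ψ ihφ ihψ =>
      intro n u u' hZ hd
      have hdφ : φ.depth ≤ n := le_trans (le_max_left _ _) hd
      have hdψ : ψ.depth ≤ n := le_trans (le_max_right _ _) hd
      have hsub : ∀ b : Bool, ((φ.imp ψ).vsgn b) = φ.vsgn (!b) ∪ ψ.vsgn b := fun _ => rfl
      constructor
      · intro hpos hneg hs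
        intro hφ'
        have h1 : ψ.vsgn true ⊆ P := le_trans (by rw [hsub]; exact Finset.subset_union_right) hpos
        have h2 : ψ.vsgn false ⊆ Q := le_trans (by rw [hsub]; exact Finset.subset_union_right) hneg
        have h3 : φ.vsgn true ⊆ Q := le_trans (by rw [hsub]; exact Finset.subset_union_left) hneg
        have h4 : φ.vsgn false ⊆ P := le_trans (by rw [hsub]; exact Finset.subset_union_left) hpos
        exact (ihψ n u u' hZ hdψ).1 h1 h2 (hs ((ihφ n u u' hZ hdφ).2 h3 h4 hφ'))
      · intro hpos hneg hs
        intro hφ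
        have h1 : ψ.vsgn true ⊆ Q := le_trans (by rw [hsub]; exact Finset.subset_union_right) hpos
        have h2 : ψ.vsgn false ⊆ P := le_trans (by rw [hsub]; exact Finset.subset_union_right) hneg
        have h3 : φ.vsgn true ⊆ P := le_trans (by rw [hsub]; exact Finset.subset_union_left) hneg
        have h4 : φ.vsgn false ⊆ Q := le_trans (by rw [hsub]; exact Finset.subset_union_left) hpos
        exact (ihψ n u u' hZ hdψ).2 h1 h2 (hs ((ihφ n u u' hZ hdφ).1 h3 h4 hφ))
  | box φ ih =>
      intro n u u' hZ hd
      have hn : φ.depth + 1 ≤ n := hd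
      obtain ⟨n', rfl⟩ : ∃ n', n = n' + 1 := ⟨n - 1, by omega⟩
      have hdφ : φ.depth ≤ n' := by omega
      constructor
      · intro hpos hneg hs x' hx'
        obtain ⟨x, hx, hZx⟩ := hzag u n' u' hZ x' hx'
        exact (ih n' x x' hZx hdφ).1 hpos hneg (hs x hx)
      · intro hpos hneg hs x hx
        obtain ⟨x', hx', hZx⟩ := hzig u n' u' hZ x hx
        exact (ih n' x x' hZx hdφ).2 hpos hneg (hs x' hx')

end ULIPAux3
section ULIPWitness

open Classical

variable (P2 P3 Q2 Q3 : Finset ℕ) (n : ℕ) (M M' : KripkeModel)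

/-- The witness model: pairs (x,x',k) with Th_k^{(P2,Q2)}(x) ⊆ Th_k(x'), k ≤ n,
plus a copy of M'. -/
def WModel : KripkeModel where
  W := {q : M.W × M'.W × ℕ // q.2.2 ≤ n ∧ Incl P2 Q2 M M' q.1 q.2.2 q.2.1} ⊕ M'.W
  nonempty := ⟨Sum.inr M'.nonempty.some⟩
  rel := fun s t =>
    match s, t with
    | Sum.inl ⟨⟨x, x', k⟩, _⟩, Sum.inl ⟨⟨y, y', j⟩, _⟩ =>
        M.rel x y ∧ M'.rel x' y' ∧ (j + 1 = k ∨ k + 1 = j)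
    | Sum.inl ⟨⟨_, x', k⟩, _⟩, Sum.inr y' => k = 0 ∧ M'.rel x' y'
    | Sum.inr y', Sum.inl ⟨⟨_, x', k⟩, _⟩ => k = 0 ∧ M'.rel x' y'
    | Sum.inr y', Sum.inr z' => M'.rel y' z'
  val := fun s p =>
    match s with
    | Sum.inl ⟨⟨x, x', _⟩, _⟩ => (M.val x p ∧ p ∉ P3) ∨ (M'.val x' p ∧ p ∈ Q2 ∪ Q3)
    | Sum.inr y' => M'.val y' p

lemma wmodel_symm (hM : Symmetric M.rel) (hM' : Symmetric M'.rel) :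
    Symmetric (WModel P2 P3 Q2 Q3 n M M').rel := by
  rintro (⟨⟨x, x', k⟩, hs⟩ | y') (⟨⟨y, y', j⟩, ht⟩ | z') h
  · obtain ⟨h1, h2, h3⟩ := h
    exact ⟨hM h1, hM' h2, h3.symm⟩
  · exact h
  · exact h
  · exact hM' h

end ULIPWitness
section ZFacts

open Classical

variable (P1 P2 P3 Q1 Q2 Q3 : Finset ℕ) (n : ℕ) (M M' : KripkeModel)

/-- The layered simulation from M into the witness model. -/
def Z1fun : M.W → ℕ → (WModel P2 P3 Q2 Q3 n M M').W → Prop := fun u l s =>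
  match s with
  | Sum.inl q => l ≤ q.1.2.2 ∧ Incl (P1 ∪ P2) (Q1 ∪ Q2) M M u l q.1.1
  | Sum.inr _ => False

/-- The layered simulation from the witness model into M'. -/
def Z2fun : (WModel P2 P3 Q2 Q3 n M M').W → ℕ → M'.W → Prop := fun s _ z' =>
  match s with
  | Sum.inl q => z' = q.1.2.1
  | Sum.inr y' => z' = y'

variable {P1 P2 P3 Q1 Q2 Q3 n M M'}

lemma Z1_at (hP13 : Disjoint P1 P3) (hP23 : Disjoint P2 P3)
    (hQ12 : Disjoint Q1 Q2) (hQ13 : Disjoint Q1 Q3) :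
    ∀ u k s, Z1fun P1 P2 P3 Q1 Q2 Q3 n M M' u k s →
      (∀ p ∈ P1 ∪ P2, M.val u p → (WModel P2 P3 Q2 Q3 n M M').val s p) ∧
      (∀ q ∈ Q1 ∪ Q2, ¬ M.val u q → ¬ (WModel P2 P3 Q2 Q3 n M M').val s q) := by
  rintro u k (⟨⟨x, x', k0⟩, hk0n, hIx⟩ | y') hZ
  · obtain ⟨hlk, hT1⟩ := hZ
    constructor
    · intro p hp hv
      show (M.val x p ∧ p ∉ P3) ∨ (M'.val x' p ∧ p ∈ Q2 ∪ Q3)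
      left
      refine ⟨incl_var hT1 hp hv, ?_⟩
      intro hp3
      rcases Finset.mem_union.mp hp with h | h
      · exact Finset.disjoint_left.mp hP13 h hp3
      · exact Finset.disjoint_left.mp hP23 h hp3
    · intro q hq hnv
      have hnx : ¬ M.val x q := incl_nvar hT1 hq hnv
      rintro (⟨hvx, _⟩ | ⟨hvx', hq23⟩)
      · exact hnx hvx
      · have hq2 : q ∈ Q2 := by
          rcases Finset.mem_union.mp hq with h | h
          · rcases Finset.mem_union.mp hq23 with h' | h'
            · exact absurd h' (Finset.disjoint_left.mp hQ12 h)
            · exact absurd h' (Finset.disjoint_left.mp hQ13 h)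
          · exact h
        exact incl_nvar hIx hq2 hnx hvx'
  · exact hZ.elim

lemma Z1_zig {F : ℕ → Finset ℕ → Finset ℕ → List Formula} (hF : IsFamily F) :
    ∀ u l s, Z1fun P1 P2 P3 Q1 Q2 Q3 n M M' u (l + 1) s → ∀ z, M.rel u z →
      ∃ t, (WModel P2 P3 Q2 Q3 n M M').rel s t ∧ Z1fun P1 P2 P3 Q1 Q2 Q3 n M M' z l t := by
  rintro u l (⟨⟨x, x', k0⟩, hk0n, hIx⟩ | y') hZ z huz
  · obtain ⟨hlk, hT1⟩ := hZ
    have hlk' : l + 1 ≤ k0 := hlk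
    have hk0n' : k0 ≤ n := hk0n
    obtain ⟨k', rfl⟩ : ∃ k', k0 = k' + 1 := ⟨k0 - 1, by omega⟩
    obtain ⟨y, hxy, hT1'⟩ := incl_forward hF hT1 huz
    obtain ⟨y', hx'y', hIy⟩ := incl_forward hF hIx hxy
    refine ⟨Sum.inl ⟨⟨y, y', k'⟩, by show k' ≤ n; omega, hIy⟩, ⟨hxy, hx'y', Or.inl rfl⟩, ?_, hT1'⟩
    show l ≤ k'
    omega
  · exact hZ.elim

lemma Z1_zag {F : ℕ → Finset ℕ → Finset ℕ → List Formula} (hF : IsFamily F) :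
    ∀ u l s, Z1fun P1 P2 P3 Q1 Q2 Q3 n M M' u (l + 1) s →
      ∀ t, (WModel P2 P3 Q2 Q3 n M M').rel s t →
      ∃ z, M.rel u z ∧ Z1fun P1 P2 P3 Q1 Q2 Q3 n M M' z l t := by
  rintro u l (⟨⟨x, x', k0⟩, hk0n, hIx⟩ | y') hZ (⟨⟨y, y', j⟩, hjn, hIy⟩ | z') hrel
  · obtain ⟨hlk, hT1⟩ := hZ
    have hlk' : l + 1 ≤ k0 := hlk
    obtain ⟨hxy, hx'y', hj⟩ := hrel
    obtain ⟨z, huz, hT1'⟩ := incl_backward hF hT1 hxy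
    exact ⟨z, huz, (by omega : l ≤ j), hT1'⟩
  · obtain ⟨hlk, hT1⟩ := hZ
    have hlk' : l + 1 ≤ k0 := hlk
    obtain ⟨hk0, _⟩ := hrel
    omega
  · exact hZ.elim
  · exact hZ.elim

lemma Z2_at :
    ∀ s k z', Z2fun P2 P3 Q2 Q3 n M M' s k z' →
      (∀ p ∈ P2 ∪ P3, (WModel P2 P3 Q2 Q3 n M M').val s p → M'.val z' p) ∧
      (∀ q ∈ Q2 ∪ Q3, ¬ (WModel P2 P3 Q2 Q3 n M M').val s q → ¬ M'.val z' q) := by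
  rintro (⟨⟨x, x', k0⟩, hk0n, hIx⟩ | y') k z' hZ
  · cases hZ
    constructor
    · rintro p hp (⟨hvx, hnp3⟩ | ⟨hv, _⟩)
      · have hp2 : p ∈ P2 := by
          rcases Finset.mem_union.mp hp with h | h
          · exact h
          · exact absurd h hnp3
        exact incl_var hIx hp2 hvx
      · exact hv
    · intro q hq hnv hv
      exact hnv (Or.inr ⟨hv, hq⟩)
  · cases hZ
    exact ⟨fun p _ hv => hv, fun q _ hnv hv => hnv hv⟩

lemma Z2_zig (hM' : Symmetric M'.rel) :
    ∀ s l z', Z2fun P2 P3 Q2 Q3 n M M' s (l + 1) z' →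
      ∀ t, (WModel P2 P3 Q2 Q3 n M M').rel s t →
      ∃ y'', M'.rel z' y'' ∧ Z2fun P2 P3 Q2 Q3 n M M' t l y'' := by
  rintro (⟨⟨x, x', k0⟩, hk0n, hIx⟩ | y') l z' hZ (⟨⟨y, y', j⟩, hjn, hIy⟩ | z'') hrel
  · cases hZ
    exact ⟨y', hrel.2.1, rfl⟩
  · cases hZ
    exact ⟨z'', hrel.2, rfl⟩
  · cases hZ
    exact ⟨y', hM' hrel.2, rfl⟩
  · cases hZ
    exact ⟨z'', hrel, rfl⟩

lemma Z2_zag {F : ℕ → Finset ℕ → Finset ℕ → List Formula} (hF : IsFamily F) :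
    ∀ s l z', Z2fun P2 P3 Q2 Q3 n M M' s (l + 1) z' →
      ∀ y'', M'.rel z' y'' →
      ∃ t, (WModel P2 P3 Q2 Q3 n M M').rel s t ∧ Z2fun P2 P3 Q2 Q3 n M M' t l y'' := by
  rintro (⟨⟨x, x', k0⟩, hk0n, hIx⟩ | y') l z' hZ y'' hrel
  · cases hZ
    match k0, hk0n, hIx with
    | 0, hk0n, hIx =>
        exact ⟨Sum.inr y'', ⟨rfl, hrel⟩, rfl⟩
    | (k' + 1), hk0n, hIx =>
        have hk0n' : k' + 1 ≤ n := hk0n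
        obtain ⟨y, hxy, hIy⟩ := incl_backward hF hIx hrel
        exact ⟨Sum.inl ⟨⟨y, y'', k'⟩, (by show k' ≤ n; omega), hIy⟩,
          ⟨hxy, hrel, Or.inl rfl⟩, rfl⟩
  · cases hZ
    exact ⟨Sum.inr y'', hrel, rfl⟩

end ZFacts
/-- The class of all symmetric Kripke models has ULIP. -/
theorem classULIP_symmetric (F : ℕ → Finset ℕ → Finset ℕ → List Formula) (hF : IsFamily F) :
    ClassULIP F {M : KripkeModel | Symmetric M.rel} := by
  intro P1 P2 P3 Q1 Q2 Q3 hP12 hP13 hP23 hQ12 hQ13 hQ23 M hM M' hM' w w' m n hTh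
  have hM : Symmetric M.rel := hM
  have hM' : Symmetric M'.rel := hM'
  have hIncl : Incl P2 Q2 M M' w n w' := by
    intro φ hpq hd hsat
    obtain ⟨φ', hφ'F, hiff⟩ := (hF n P2 Q2).2 φ hpq hd
    have hmem : φ' ∈ Th F M n P2 Q2 w := ⟨hφ'F, (sat_iff_of_K hiff M w).mpr hsat⟩
    exact (sat_iff_of_K hiff M' w').mp (hTh hmem).2
  set wst : (WModel P2 P3 Q2 Q3 n M M').W :=
    Sum.inl ⟨⟨w, w', n⟩, le_refl n, hIncl⟩ with hwst
  have hZ1w : Z1fun P1 P2 P3 Q1 Q2 Q3 n M M' w n wst := ⟨le_refl n, incl_refl w n⟩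
  have hZ2w : Z2fun P2 P3 Q2 Q3 n M M' wst m w' := rfl
  refine ⟨WModel P2 P3 Q2 Q3 n M M', wmodel_symm P2 P3 Q2 Q3 n M M' hM hM', wst, ?_, ?_⟩
  · rintro φ ⟨hφF, hφw⟩
    obtain ⟨hpq, hd⟩ := (hF n (P1 ∪ P2) (Q1 ∪ Q2)).1 φ hφF
    refine ⟨hφF, ?_⟩
    exact (preservation (Z1_at hP13 hP23 hQ12 hQ13) (Z1_zig hF) (Z1_zag hF)
      φ n w wst hZ1w hd).1 hpq.1 hpq.2 hφw
  · rintro φ ⟨hφF, hφst⟩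
    obtain ⟨hpq, hd⟩ := (hF m (P2 ∪ P3) (Q2 ∪ Q3)).1 φ hφF
    refine ⟨hφF, ?_⟩
    exact (preservation Z2_at (Z2_zig hM') (Z2_zag hF)
      φ m wst w' hZ2w hd).1 hpq.1 hpq.2 hφst
end

section
/- The modal logic K enjoys ULIP; moreover, for every formula φ and all finite sets P, Q of propositional variables there exists a uniform Lyndon interpolant θ of (φ,P,Q) in K with d(θ) ≤ d(φ). -/
open Classical

namespace KProof

open Formula

/-- Hilbert-style provability for K. -/
inductive Prov : Formula → Prop
  | taut {φ} : Tautology φ → Prov φ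
  | axK (α β : Formula) : Prov ((α.imp β).box.imp (α.box.imp β.box))
  | mp {φ ψ} : Prov (φ.imp ψ) → Prov φ → Prov ψ
  | nec {φ} : Prov φ → Prov φ.box

theorem taut_subst {φ : Formula} (h : Tautology φ) (σ : ℕ → Formula) :
    Tautology (φ.subst σ) := by
  intro v h0 h1
  exact h (fun ξ => v (ξ.subst σ)) h0 (fun ψ θ => h1 (ψ.subst σ) (θ.subst σ))

theorem Prov.subst {φ : Formula} (h : Prov φ) (σ : ℕ → Formula) : Prov (φ.subst σ) := by
  induction h with
  | taut h => exact Prov.taut (taut_subst h σ)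
  | axK α β => exact Prov.axK (α.subst σ) (β.subst σ)
  | mp h1 h2 ih1 ih2 => exact Prov.mp ih1 ih2
  | nec h ih => exact Prov.nec ih

theorem isNormal_prov : IsNormal {φ | Prov φ} where
  taut _ h := Prov.taut h
  axK := Prov.axK (var 0) (var 1)
  mp _ _ h1 h2 := Prov.mp h1 h2
  nec _ h := Prov.nec h
  subst_mem _ h σ := Prov.subst h σ

theorem theoryK_eq : TheoryK = {φ | Prov φ} := by
  apply Set.Subset.antisymm
  · exact Set.sInter_subset_of_mem ⟨isNormal_prov, by simp⟩
  · intro φ hφ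
    intro L hL
    obtain ⟨hN, -⟩ := hL
    induction hφ with
    | taut h => exact hN.taut _ h
    | axK α β =>
        have := hN.subst_mem _ hN.axK (fun n => if n = 0 then α else β)
        simpa [Formula.subst] using this
    | mp h1 h2 ih1 ih2 => exact hN.mp _ _ ih1 ih2
    | nec h ih => exact hN.nec _ ih

end KProof
namespace KProof
open Formula

def fOr (φ ψ : Formula) : Formula := φ.neg.imp ψ

def disjList : List Formula → Formula
  | [] => Formula.bot
  | φ :: l => fOr φ (disjList l)

section valrules
variable {v : Formula → Bool} (h0 : v Formula.bot = false)
  (h1 : ∀ ψ θ : Formula, v (ψ.imp θ) = (!v ψ || v θ))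
include h0 h1

theorem val_neg (ψ : Formula) : v ψ.neg = !v ψ := by
  simp only [Formula.neg, h1, h0]; cases v ψ <;> rfl

theorem val_top : v Formula.top = true := by
  simp only [Formula.top, Formula.neg, h1, h0]; rfl

theorem val_and (ψ θ : Formula) : v (ψ.and θ) = (v ψ && v θ) := by
  simp only [Formula.and, Formula.neg, h1, h0]; cases v ψ <;> cases v θ <;> rfl

theorem val_or (ψ θ : Formula) : v (fOr ψ θ) = (v ψ || v θ) := by
  simp only [fOr, Formula.neg, h1, h0]; cases v ψ <;> cases v θ <;> rfl

end valrules

theorem prov_imp_top (φ : Formula) : Prov (φ.imp Formula.top) := by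
  apply Prov.taut; intro v h0 h1
  simp only [h1, val_top h0 h1, Bool.or_true]

theorem prov_conj_intro (φ α β : Formula) :
    Prov ((φ.imp α).imp ((φ.imp β).imp (φ.imp (α.and β)))) := by
  apply Prov.taut; intro v h0 h1
  simp only [h1, val_and h0 h1]
  cases v φ <;> cases v α <;> cases v β <;> rfl

theorem prov_imp_conjList {φ : Formula} {l : List Formula}
    (h : ∀ E ∈ l, Prov (φ.imp E)) : Prov (φ.imp (conjList l)) := by
  induction l with
  | nil => exact prov_imp_top φ
  | cons E l ih =>
      have h1 := h E (by simp)
      have h2 := ih (fun x hx => h x (by simp [hx]))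
      exact Prov.mp (Prov.mp (prov_conj_intro φ E (conjList l)) h1) h2

theorem prov_negconj (φ : Formula) (l : List Formula) :
    Prov ((φ.and (conjList (l.map Formula.neg))).neg.imp (φ.imp (disjList l))) := by
  induction l with
  | nil =>
      apply Prov.taut; intro v h0 h1
      simp only [List.map, conjList, disjList, h1, h0, val_and h0 h1, val_neg h0 h1,
        val_top h0 h1]
      cases v φ <;> rfl
  | cons C l ih =>
      have t : Tautology
          ((((φ.and (conjList (l.map Formula.neg))).neg.imp (φ.imp (disjList l)))).imp
            ((φ.and (conjList ((C :: l).map Formula.neg))).neg.imp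
              (φ.imp (disjList (C :: l))))) := by
        intro v h0 h1
        simp only [List.map, conjList, disjList, h1, h0, val_and h0 h1, val_neg h0 h1,
          val_or h0 h1]
        cases v φ <;> cases v C <;> cases v (conjList (l.map Formula.neg)) <;>
          cases v (disjList l) <;> rfl
      exact Prov.mp (Prov.taut t) ih

theorem prov_conj_elim {x : Formula} {m : List Formula} (hx : x ∈ m) :
    Prov ((conjList m).imp x) := by
  induction m with
  | nil => simp at hx
  | cons y m ih =>
      rcases List.mem_cons.1 hx with h | h
      · subst h
        apply Prov.taut; intro v h0 h1
        simp only [conjList, h1, val_and h0 h1]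
        cases v x <;> cases v (conjList m) <;> rfl
      · have h2 := ih h
        have t : Tautology (((conjList m).imp x).imp ((conjList (y :: m)).imp x)) := by
          intro v h0 h1
          simp only [conjList, h1, val_and h0 h1]
          cases v x <;> cases v y <;> cases v (conjList m) <;> rfl
        exact Prov.mp (Prov.taut t) h2

/-- From a list whose members are in `m` or equal `a`. -/
theorem prov_conj_cover {a : Formula} {m l : List Formula}
    (h : ∀ x ∈ l, x ∈ m ∨ x = a) :
    Prov ((a.and (conjList m)).imp (conjList l)) := by
  induction l with
  | nil => exact prov_imp_top _
  | cons x l ih =>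
      have h2 := ih (fun y hy => h y (by simp [hy]))
      have h1 : Prov ((a.and (conjList m)).imp x) := by
        rcases h x (by simp) with hx | hx
        · have h3 := prov_conj_elim hx
          have t : Tautology (((conjList m).imp x).imp ((a.and (conjList m)).imp x)) := by
            intro v h0 h1
            simp only [h1, val_and h0 h1]
            cases v x <;> cases v a <;> cases v (conjList m) <;> rfl
          exact Prov.mp (Prov.taut t) h3
        · subst hx
          apply Prov.taut; intro v h0 h1
          simp only [h1, val_and h0 h1]
          cases v x <;> cases v (conjList m) <;> rfl
      have t : Tautology (((a.and (conjList m)).imp x).imp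
          (((a.and (conjList m)).imp (conjList l)).imp
            ((a.and (conjList m)).imp (conjList (x :: l))))) :=
        fun v h0 h1 => by
          simp only [conjList, h1, val_and h0 h1]
          cases v a <;> cases v (conjList m) <;> cases v x <;> cases v (conjList l) <;> rfl
      exact Prov.mp (Prov.mp (Prov.taut t) h1) h2

theorem prov_box_imp {α β : Formula} (h : Prov (α.imp β)) : Prov (α.box.imp β.box) :=
  Prov.mp (Prov.axK α β) (Prov.nec h)

theorem prov_boxconj (m : List Formula) :
    Prov ((conjList (m.map Formula.box)).imp (conjList m).box) := by
  induction m with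
  | nil =>
      have h : Prov ((conjList ([] : List Formula)).box) :=
        Prov.nec (by apply Prov.taut; intro v h0 h1; exact val_top h0 h1)
      have t : Tautology ((conjList ([] : List Formula)).box.imp
          ((conjList (([] : List Formula).map Formula.box)).imp
            (conjList ([] : List Formula)).box)) := by
        intro v h0 h1
        simp only [h1, List.map_nil]
        cases v (conjList ([] : List Formula)).box <;>
          cases v (conjList ([] : List Formula)) <;> rfl
      exact Prov.mp (Prov.taut t) h
  | cons x m ih =>
      have hpair : Prov (x.box.imp ((conjList m).box.imp (conjList (x :: m)).box)) := by
        have h1 : Prov ((conjList m).imp (x.imp (conjList (x :: m)))) := by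
          apply Prov.taut; intro v h0 h1
          simp only [conjList, h1, val_and h0 h1]
          cases v x <;> cases v (conjList m) <;> rfl
        have h2 := prov_box_imp h1
        have h3 := Prov.axK x (conjList (x :: m))
        have h4 := Prov.axK (conjList m) (x.imp (conjList (x :: m)))
        -- combine: □conj m → □(x → conj(x::m)) ; □(x→c) → (□x → □c)
        have t : Tautology (((conjList m).box.imp (x.imp (conjList (x :: m))).box).imp
            (((x.imp (conjList (x :: m))).box.imp (x.box.imp (conjList (x :: m)).box)).imp
              (x.box.imp ((conjList m).box.imp (conjList (x :: m)).box)))) := by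
          intro v h0 h1
          simp only [h1]
          cases v (conjList m).box <;> cases v (x.imp (conjList (x :: m))).box <;>
            cases v x.box <;> cases v (conjList (x :: m)).box <;> rfl
        exact Prov.mp (Prov.mp (Prov.taut t) h2) h3
      have t : Tautology ((x.box.imp ((conjList m).box.imp (conjList (x :: m)).box)).imp
          (((conjList (m.map Formula.box)).imp (conjList m).box).imp
            ((conjList ((x :: m).map Formula.box)).imp (conjList (x :: m)).box))) := by
        intro v h0 h1
        simp only [List.map_cons, conjList, h1, val_and h0 h1]
        cases v x.box <;> cases v (conjList (List.map Formula.box m)) <;>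
          cases v (conjList m).box <;> cases v (x.and (conjList m)).box <;> rfl
      exact Prov.mp (Prov.mp (Prov.taut t) hpair) ih

end KProof
namespace KProof
open Formula

attribute [local instance] Classical.propDecidable

/-! ### Satisfaction lemmas -/

theorem sat_bot (M : KripkeModel) (w : M.W) : M.Sat Formula.bot w ↔ False := Iff.rfl

theorem sat_imp (M : KripkeModel) (φ ψ : Formula) (w : M.W) :
    M.Sat (φ.imp ψ) w ↔ (M.Sat φ w → M.Sat ψ w) := Iff.rfl

theorem sat_neg (M : KripkeModel) (φ : Formula) (w : M.W) :
    M.Sat φ.neg w ↔ ¬ M.Sat φ w := Iff.rfl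

theorem sat_top (M : KripkeModel) (w : M.W) : M.Sat Formula.top w := fun h => h

theorem sat_and (M : KripkeModel) (φ ψ : Formula) (w : M.W) :
    M.Sat (φ.and ψ) w ↔ (M.Sat φ w ∧ M.Sat ψ w) := by
  show ¬(M.Sat φ w → ¬ M.Sat ψ w) ↔ _
  tauto

theorem sat_or (M : KripkeModel) (φ ψ : Formula) (w : M.W) :
    M.Sat (fOr φ ψ) w ↔ (M.Sat φ w ∨ M.Sat ψ w) := by
  show (¬ M.Sat φ w → M.Sat ψ w) ↔ _
  tauto

theorem sat_box (M : KripkeModel) (φ : Formula) (w : M.W) :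
    M.Sat φ.box w ↔ ∀ x, M.rel w x → M.Sat φ x := Iff.rfl

theorem sat_dia (M : KripkeModel) (φ : Formula) (w : M.W) :
    M.Sat φ.dia w ↔ ∃ x, M.rel w x ∧ M.Sat φ x := by
  show ¬(∀ x, M.rel w x → ¬ M.Sat φ x) ↔ _
  push_neg
  simp

theorem sat_conjList (M : KripkeModel) (l : List Formula) (w : M.W) :
    M.Sat (conjList l) w ↔ ∀ x ∈ l, M.Sat x w := by
  induction l with
  | nil => simpa [conjList] using sat_top M w
  | cons y l ih => simp [conjList, sat_and, ih]

theorem sat_disjList (M : KripkeModel) (l : List Formula) (w : M.W) :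
    M.Sat (disjList l) w ↔ ∃ x ∈ l, M.Sat x w := by
  induction l with
  | nil => simp [disjList, sat_bot]
  | cons y l ih => simp [disjList, sat_or, ih]

/-! ### Soundness -/

theorem sound {φ : Formula} (h : Prov φ) : ∀ (M : KripkeModel) (w : M.W), M.Sat φ w := by
  induction h with
  | @taut φ h =>
      intro M w
      have := h (fun ξ => decide (M.Sat ξ w)) (by simp [sat_bot])
        (fun ψ θ => by
          by_cases hψ : M.Sat ψ w <;> by_cases hθ : M.Sat θ w <;>
            simp [sat_imp, hψ, hθ])
      simpa using this
  | axK α β =>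
      intro M w h1 h2 x hx
      exact h1 x hx (h2 x hx)
  | mp h1 h2 ih1 ih2 => exact fun M w => ih1 M w (ih2 M w)
  | nec h ih => exact fun M w x _ => ih M x

theorem not_prov_bot : ¬ Prov Formula.bot := by
  intro h
  exact sound h ⟨Unit, ⟨()⟩, fun _ _ => False, fun _ _ => False⟩ ()

/-! ### Signed variables and depth of the connectives -/

theorem vsgn_neg (φ : Formula) (b : Bool) : φ.neg.vsgn b = φ.vsgn (!b) := by
  simp [Formula.neg, vsgn]

theorem vsgn_and (φ ψ : Formula) (b : Bool) : (φ.and ψ).vsgn b = φ.vsgn b ∪ ψ.vsgn b := by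
  cases b <;> simp [Formula.and, Formula.neg, vsgn]

theorem vsgn_or (φ ψ : Formula) (b : Bool) : (fOr φ ψ).vsgn b = φ.vsgn b ∪ ψ.vsgn b := by
  cases b <;> simp [fOr, Formula.neg, vsgn]

theorem vsgn_dia (φ : Formula) (b : Bool) : φ.dia.vsgn b = φ.vsgn b := by
  cases b <;> simp [Formula.dia, Formula.neg, vsgn]

theorem vsgn_box (φ : Formula) (b : Bool) : φ.box.vsgn b = φ.vsgn b := rfl

theorem vsgn_conjList {l : List Formula} {S : Finset ℕ} {b : Bool}
    (h : ∀ x ∈ l, x.vsgn b ⊆ S) : (conjList l).vsgn b ⊆ S := by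
  induction l with
  | nil => cases b <;> simp [conjList, Formula.top, Formula.neg, vsgn]
  | cons y l ih =>
      simp only [conjList, vsgn_and]
      exact Finset.union_subset (h y (by simp)) (ih (fun x hx => h x (by simp [hx])))

theorem vsgn_disjList {l : List Formula} {S : Finset ℕ} {b : Bool}
    (h : ∀ x ∈ l, x.vsgn b ⊆ S) : (disjList l).vsgn b ⊆ S := by
  induction l with
  | nil => cases b <;> simp [disjList, vsgn]
  | cons y l ih =>
      simp only [disjList, vsgn_or]
      exact Finset.union_subset (h y (by simp)) (ih (fun x hx => h x (by simp [hx])))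

theorem depth_neg (φ : Formula) : φ.neg.depth = φ.depth := by
  simp [Formula.neg, depth]

theorem depth_and (φ ψ : Formula) : (φ.and ψ).depth = max φ.depth ψ.depth := by
  simp [Formula.and, Formula.neg, depth]

theorem depth_or (φ ψ : Formula) : (fOr φ ψ).depth = max φ.depth ψ.depth := by
  simp [fOr, Formula.neg, depth]

theorem depth_dia (φ : Formula) : φ.dia.depth = φ.depth + 1 := by
  simp [Formula.dia, Formula.neg, depth]

theorem depth_conjList {l : List Formula} {n : ℕ}
    (h : ∀ x ∈ l, x.depth ≤ n) : (conjList l).depth ≤ n := by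
  induction l with
  | nil => simp [conjList, Formula.top, Formula.neg, depth]
  | cons y l ih =>
      simp only [conjList, depth_and, max_le_iff]
      exact ⟨h y (by simp), ih (fun x hx => h x (by simp [hx]))⟩

theorem depth_disjList {l : List Formula} {n : ℕ}
    (h : ∀ x ∈ l, x.depth ≤ n) : (disjList l).depth ≤ n := by
  induction l with
  | nil => simp [disjList, depth]
  | cons y l ih =>
      simp only [disjList, depth_or, max_le_iff]
      exact ⟨h y (by simp), ih (fun x hx => h x (by simp [hx]))⟩

end KProof
namespace KProof
open Formula

attribute [local instance] Classical.propDecidable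

/-! ### Deducibility from a set, consistency, Lindenbaum -/

def SetProv (Γ : Set Formula) (φ : Formula) : Prop :=
  ∃ l : List Formula, (∀ x ∈ l, x ∈ Γ) ∧ Prov ((conjList l).imp φ)

def Consistent (Γ : Set Formula) : Prop := ¬ SetProv Γ Formula.bot

def MCS (Γ : Set Formula) : Prop := Consistent Γ ∧ ∀ φ : Formula, φ ∈ Γ ∨ φ.neg ∈ Γ

theorem SetProv.mono {Γ Δ : Set Formula} {φ : Formula} (h : SetProv Γ φ) (hsub : Γ ⊆ Δ) :
    SetProv Δ φ := by
  obtain ⟨l, hl, hp⟩ := h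
  exact ⟨l, fun x hx => hsub (hl x hx), hp⟩

theorem setProv_of_mem {Γ : Set Formula} {φ : Formula} (h : φ ∈ Γ) : SetProv Γ φ :=
  ⟨[φ], by simpa using h, prov_conj_elim (by simp)⟩

theorem setProv_of_prov {Γ : Set Formula} {φ : Formula} (h : Prov φ) : SetProv Γ φ := by
  refine ⟨[], by simp, ?_⟩
  have t : Tautology (φ.imp ((conjList []).imp φ)) := by
    intro v h0 h1
    simp only [h1]
    cases v φ <;> cases v (conjList ([] : List Formula)) <;> rfl
  exact Prov.mp (Prov.taut t) h

theorem setProv_mp {Γ : Set Formula} {φ ψ : Formula}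
    (h1 : SetProv Γ (φ.imp ψ)) (h2 : SetProv Γ φ) : SetProv Γ ψ := by
  obtain ⟨l1, hl1, hp1⟩ := h1
  obtain ⟨l2, hl2, hp2⟩ := h2
  refine ⟨l1 ++ l2, fun x hx => ?_, ?_⟩
  · rcases List.mem_append.1 hx with h | h
    · exact hl1 x h
    · exact hl2 x h
  · have e1 : Prov ((conjList (l1 ++ l2)).imp (conjList l1)) := by
      apply prov_imp_conjList
      intro E hE
      exact prov_conj_elim (by simp [hE])
    have e2 : Prov ((conjList (l1 ++ l2)).imp (conjList l2)) := by
      apply prov_imp_conjList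
      intro E hE
      exact prov_conj_elim (by simp [hE])
    -- combine propositionally
    have t : Tautology (((conjList (l1 ++ l2)).imp (conjList l1)).imp
        (((conjList (l1 ++ l2)).imp (conjList l2)).imp
          (((conjList l1).imp (φ.imp ψ)).imp
            (((conjList l2).imp φ).imp ((conjList (l1 ++ l2)).imp ψ))))) := by
      intro v h0 h1
      simp only [h1]
      cases v (conjList (l1 ++ l2)) <;> cases v (conjList l1) <;> cases v (conjList l2) <;>
        cases v φ <;> cases v ψ <;> rfl
    exact Prov.mp (Prov.mp (Prov.mp (Prov.mp (Prov.taut t) e1) e2) hp1) hp2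

/-- Deduction-style lemma: if `Γ ∪ {φ}` proves `ψ` then `Γ` proves `φ.imp ψ`. -/
theorem setProv_deduction {Γ : Set Formula} {φ ψ : Formula}
    (h : SetProv (Γ ∪ {φ}) ψ) : SetProv Γ (φ.imp ψ) := by
  obtain ⟨l, hl, hp⟩ := h
  set m := l.filter (fun x => x ≠ φ) with hm
  refine ⟨m, fun x hx => ?_, ?_⟩
  · have := List.of_mem_filter hx
    have hmem := List.mem_of_mem_filter hx
    rcases hl x hmem with h | h
    · exact h
    · simp at this h
      exact absurd h this
  · have hcov : ∀ x ∈ l, x ∈ m ∨ x = φ := by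
      intro x hx
      by_cases hxφ : x = φ
      · exact Or.inr hxφ
      · exact Or.inl (List.mem_filter.2 ⟨hx, by simpa using hxφ⟩)
    have h1 := prov_conj_cover hcov
    have t : Tautology (((φ.and (conjList m)).imp (conjList l)).imp
        (((conjList l).imp ψ).imp ((conjList m).imp (φ.imp ψ)))) := by
      intro v h0 h1
      simp only [h1, val_and h0 h1]
      cases v φ <;> cases v (conjList m) <;> cases v (conjList l) <;> cases v ψ <;> rfl
    exact Prov.mp (Prov.mp (Prov.taut t) h1) hp

theorem consistent_insert {Γ : Set Formula} {φ : Formula}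
    (h : ¬ SetProv Γ φ.neg) : Consistent (Γ ∪ {φ}) := by
  intro hbad
  exact h (setProv_deduction hbad)

/-- Lindenbaum lemma. -/
theorem lindenbaum {Γ : Set Formula} (h : Consistent Γ) :
    ∃ Δ : Set Formula, Γ ⊆ Δ ∧ MCS Δ := by
  obtain ⟨Δ, hΔmem, hΔmax⟩ := zorn_subset_nonempty {Δ : Set Formula | Consistent Δ}
    (fun c hc hchain hne => by
      refine ⟨⋃₀ c, ?_, fun s hs => Set.subset_sUnion_of_mem hs⟩
      intro hbad
      obtain ⟨l, hl, hp⟩ := hbad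
      -- find a single member of the chain containing all of l
      have : ∃ t ∈ c, ∀ x ∈ l, x ∈ t := by
        clear hp
        induction l with
        | nil =>
            obtain ⟨t, ht⟩ := hne
            exact ⟨t, ht, by simp⟩
        | cons y l ih =>
            obtain ⟨t, htc, htl⟩ := ih (fun x hx => hl x (by simp [hx]))
            obtain ⟨s, hsc, hys⟩ := hl y (by simp)
            rcases hchain.total htc hsc with hts | hst
            · exact ⟨s, hsc, by
                intro x hx
                rcases List.mem_cons.1 hx with h | h
                · subst h; exact hys
                · exact hts (htl x h)⟩
            · exact ⟨t, htc, by
                intro x hx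
                rcases List.mem_cons.1 hx with h | h
                · subst h; exact hst hys
                · exact htl x h⟩
      obtain ⟨t, htc, htl⟩ := this
      exact hc htc ⟨l, htl, hp⟩) Γ h
  have hcons0 : Consistent Δ := hΔmax.1
  refine ⟨Δ, hΔmem, hcons0, fun φ => ?_⟩
  by_contra hbad
  push_neg at hbad
  obtain ⟨h1, h2⟩ := hbad
  by_cases hp : SetProv Δ φ.neg
  · -- Δ ∪ {φ.neg} is consistent, contradicting maximality
    have hcons : Consistent (Δ ∪ {φ.neg}) := by
      intro hbad2
      have h3 := setProv_deduction hbad2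
      -- Δ ⊢ ¬¬φ and Δ ⊢ ¬φ
      obtain ⟨l1, hl1, hp1⟩ := h3
      obtain ⟨l2, hl2, hp2⟩ := hp
      refine hcons0 ⟨l1 ++ l2, fun x hx => ?_, ?_⟩
      · rcases List.mem_append.1 hx with h | h
        · exact hl1 x h
        · exact hl2 x h
      · have e1 : Prov ((conjList (l1 ++ l2)).imp (conjList l1)) :=
          prov_imp_conjList (fun E hE => prov_conj_elim (by simp [hE]))
        have e2 : Prov ((conjList (l1 ++ l2)).imp (conjList l2)) :=
          prov_imp_conjList (fun E hE => prov_conj_elim (by simp [hE]))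
        have t : Tautology (((conjList (l1 ++ l2)).imp (conjList l1)).imp
            (((conjList (l1 ++ l2)).imp (conjList l2)).imp
              (((conjList l1).imp (φ.neg.imp Formula.bot)).imp
                (((conjList l2).imp φ.neg).imp ((conjList (l1 ++ l2)).imp Formula.bot))))) := by
          intro v h0 h1
          simp only [h1, h0]
          cases v (conjList (l1 ++ l2)) <;> cases v (conjList l1) <;>
            cases v (conjList l2) <;> cases v φ.neg <;> rfl
        exact Prov.mp (Prov.mp (Prov.mp (Prov.mp (Prov.taut t) e1) e2) hp1) hp2
    have hle := hΔmax.2 hcons (Set.subset_union_left)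
    exact h2 (hle (Set.mem_union_right _ (by simp)))
  · have hcons : Consistent (Δ ∪ {φ}) := consistent_insert hp
    have hle := hΔmax.2 hcons (Set.subset_union_left)
    exact h1 (hle (Set.mem_union_right _ (by simp)))

end KProof
namespace KProof
open Formula

attribute [local instance] Classical.propDecidable

/-! ### MCS properties -/

theorem MCS.not_setProv_bot {Γ : Set Formula} (h : MCS Γ) : ¬ SetProv Γ Formula.bot := h.1

theorem MCS.mem_of_setProv {Γ : Set Formula} (h : MCS Γ) {φ : Formula}
    (hp : SetProv Γ φ) : φ ∈ Γ := by
  rcases h.2 φ with hφ | hφ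
  · exact hφ
  · exfalso
    apply h.1
    have h2 : SetProv Γ φ.neg := setProv_of_mem hφ
    exact setProv_mp h2 hp

theorem MCS.bot_not_mem {Γ : Set Formula} (h : MCS Γ) : Formula.bot ∉ Γ :=
  fun hb => h.1 (setProv_of_mem hb)

theorem MCS.neg_mem_iff {Γ : Set Formula} (h : MCS Γ) {φ : Formula} :
    φ.neg ∈ Γ ↔ φ ∉ Γ := by
  constructor
  · intro h1 h2
    exact h.1 (setProv_mp (setProv_of_mem h1) (setProv_of_mem h2))
  · intro h1
    rcases h.2 φ with h2 | h2
    · exact absurd h2 h1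
    · exact h2

theorem MCS.imp_mem_iff {Γ : Set Formula} (h : MCS Γ) {φ ψ : Formula} :
    φ.imp ψ ∈ Γ ↔ (φ ∈ Γ → ψ ∈ Γ) := by
  constructor
  · intro h1 h2
    exact h.mem_of_setProv (setProv_mp (setProv_of_mem h1) (setProv_of_mem h2))
  · intro h1
    by_cases h2 : φ ∈ Γ
    · have h3 := setProv_of_mem (h1 h2)
      apply h.mem_of_setProv
      refine setProv_mp ?_ h3
      apply setProv_of_prov
      apply Prov.taut; intro v h0 h1'
      simp only [h1']
      cases v φ <;> cases v ψ <;> rfl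
    · have h3 := setProv_of_mem (h.neg_mem_iff.2 h2)
      apply h.mem_of_setProv
      refine setProv_mp ?_ h3
      apply setProv_of_prov
      apply Prov.taut; intro v h0 h1'
      simp only [Formula.neg, h1', h0]
      cases v φ <;> cases v ψ <;> rfl

/-! ### Canonical model -/

theorem exists_mcs : ∃ Γ : Set Formula, MCS Γ := by
  have h : Consistent (∅ : Set Formula) := by
    rintro ⟨l, hl, hp⟩
    have hnil : l = [] := by
      cases l with
      | nil => rfl
      | cons x l => exact absurd (hl x (by simp)) (by simp)
    subst hnil
    have htop : Prov (conjList []) := by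
      apply Prov.taut; intro v h0 h1
      simp only [conjList, Formula.top, Formula.neg, h1, h0]
      rfl
    exact not_prov_bot (Prov.mp hp htop)
  obtain ⟨Δ, _, hΔ⟩ := lindenbaum h
  exact ⟨Δ, hΔ⟩

noncomputable def canonicalModel : KripkeModel where
  W := {Γ : Set Formula // MCS Γ}
  nonempty := by
    obtain ⟨Γ, hΓ⟩ := exists_mcs
    exact ⟨⟨Γ, hΓ⟩⟩
  rel Γ Δ := ∀ χ : Formula, χ.box ∈ Γ.1 → χ ∈ Δ.1
  val Γ p := Formula.var p ∈ Γ.1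

theorem truth_lemma : ∀ (φ : Formula) (Γ : canonicalModel.W),
    canonicalModel.Sat φ Γ ↔ φ ∈ Γ.1 := by
  intro φ
  induction φ with
  | var p => intro Γ; exact Iff.rfl
  | bot => intro Γ; simpa [sat_bot] using (Γ.2.bot_not_mem)
  | imp φ ψ ihφ ihψ =>
      intro Γ
      rw [sat_imp, ihφ Γ, ihψ Γ, Γ.2.imp_mem_iff]
  | box φ ih =>
      intro Γ
      constructor
      · intro h
        by_contra hbox
        -- the set {ψ | □ψ ∈ Γ} ∪ {φ.neg} is consistent
        have hcons : Consistent ({ψ : Formula | ψ.box ∈ Γ.1} ∪ {φ.neg}) := by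
          rintro hbad
          have h3 := setProv_deduction hbad
          obtain ⟨m, hm, hp⟩ := h3
          -- hp : ⊢ conj m → (¬φ → ⊥); so ⊢ conj m → φ
          have hp2 : Prov ((conjList m).imp φ) := by
            have t : Tautology (((conjList m).imp (φ.neg.imp Formula.bot)).imp
                ((conjList m).imp φ)) := by
              intro v h0 h1
              simp only [Formula.neg, h1, h0]
              cases v (conjList m) <;> cases v φ <;> rfl
            exact Prov.mp (Prov.taut t) hp
          have hp3 : Prov ((conjList (m.map Formula.box)).imp φ.box) := by
            have hb := prov_box_imp hp2
            have hc := prov_boxconj m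
            have t : Tautology (((conjList (m.map Formula.box)).imp (conjList m).box).imp
                (((conjList m).box.imp φ.box).imp
                  ((conjList (m.map Formula.box)).imp φ.box))) := by
              intro v h0 h1
              simp only [h1]
              cases v (conjList (m.map Formula.box)) <;> cases v (conjList m).box <;>
                cases v φ.box <;> rfl
            exact Prov.mp (Prov.mp (Prov.taut t) hc) hb
          have hmem : SetProv Γ.1 φ.box := by
            refine ⟨m.map Formula.box, ?_, hp3⟩
            intro x hx
            obtain ⟨y, hy, rfl⟩ := List.mem_map.1 hx
            exact hm y hy
          exact hbox (Γ.2.mem_of_setProv hmem)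
        obtain ⟨Δ, hΔsub, hΔ⟩ := lindenbaum hcons
        have hrel : canonicalModel.rel Γ ⟨Δ, hΔ⟩ := by
          intro χ hχ
          exact hΔsub (Set.mem_union_left _ hχ)
        have hsat := h ⟨Δ, hΔ⟩ hrel
        rw [ih ⟨Δ, hΔ⟩] at hsat
        have : φ.neg ∈ Δ := hΔsub (Set.mem_union_right _ (by simp))
        exact (hΔ.neg_mem_iff.1 this) hsat
      · intro h Δ hrel
        rw [ih Δ]
        exact hrel φ h

/-- Weak completeness: a consistent formula is satisfiable. -/
theorem satisfiable_of_not_prov_neg {φ : Formula} (h : ¬ Prov φ.neg) :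
    ∃ (M : KripkeModel) (w : M.W), M.Sat φ w := by
  have hcons : Consistent {φ} := by
    rintro ⟨l, hl, hp⟩
    apply h
    have hcov : ∀ x ∈ l, x ∈ ([] : List Formula) ∨ x = φ := by
      intro x hx
      exact Or.inr (hl x hx)
    have h1 := prov_conj_cover (m := []) hcov
    have t : Tautology (((φ.and (conjList [])).imp (conjList l)).imp
        (((conjList l).imp Formula.bot).imp φ.neg)) := by
      intro v h0 h1'
      simp only [conjList, Formula.top, Formula.neg, h1', h0, val_and h0 h1']
      cases v φ <;> cases v (conjList l) <;> rfl
    exact Prov.mp (Prov.mp (Prov.taut t) h1) hp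
  obtain ⟨Δ, hsub, hΔ⟩ := lindenbaum hcons
  refine ⟨canonicalModel, ⟨Δ, hΔ⟩, ?_⟩
  rw [truth_lemma φ (⟨Δ, hΔ⟩ : canonicalModel.W)]
  exact hsub (by simp)

end KProof
namespace KProof
open Formula

attribute [local instance] Classical.propDecidable

/-! ### The finite family of normal forms -/

noncomputable def baseAtoms (A B : Finset ℕ) : List Formula :=
  A.toList.map Formula.var ++ B.toList.map (fun q => (Formula.var q).neg)

noncomputable def mkDNF (ats : List Formula) : List Formula :=
  ((ats.sublists.map conjList).sublists).map disjList

noncomputable def LL : ℕ → Finset ℕ → Finset ℕ → List Formula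
  | 0, A, B => mkDNF (baseAtoms A B)
  | k+1, A, B =>
      mkDNF (baseAtoms A B ++ (LL k A B).map Formula.box ++ (LL k A B).map Formula.dia)

noncomputable def atoms : ℕ → Finset ℕ → Finset ℕ → List Formula
  | 0, A, B => baseAtoms A B
  | k+1, A, B => baseAtoms A B ++ (LL k A B).map Formula.box ++ (LL k A B).map Formula.dia

theorem LL_eq (k : ℕ) (A B : Finset ℕ) : LL k A B = mkDNF (atoms k A B) := by
  cases k <;> rfl

def Eqv (φ ψ : Formula) : Prop := ∀ (M : KripkeModel) (w : M.W), M.Sat φ w ↔ M.Sat ψ w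

theorem baseAtoms_good {A B : Finset ℕ} {a : Formula} (ha : a ∈ baseAtoms A B) :
    PQFormula A B a ∧ a.depth = 0 := by
  rcases List.mem_append.1 ha with h | h
  · obtain ⟨p, hp, rfl⟩ := List.mem_map.1 h
    have hpA : p ∈ A := Finset.mem_toList.1 hp
    refine ⟨⟨?_, ?_⟩, rfl⟩
    · simp [Formula.vpos, vsgn, hpA]
    · simp [Formula.vneg, vsgn]
  · obtain ⟨q, hq, rfl⟩ := List.mem_map.1 h
    have hqB : q ∈ B := Finset.mem_toList.1 hq
    refine ⟨⟨?_, ?_⟩, by simp [depth_neg, depth]⟩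
    · simp [Formula.vpos, vsgn_neg, vsgn]
    · simp [Formula.vneg, vsgn_neg, vsgn, hqB]

theorem mkDNF_good {A B : Finset ℕ} {ats : List Formula} {k : ℕ}
    (h : ∀ a ∈ ats, PQFormula A B a ∧ a.depth ≤ k) :
    ∀ C ∈ mkDNF ats, PQFormula A B C ∧ C.depth ≤ k := by
  intro C hC
  obtain ⟨l, hl, rfl⟩ := List.mem_map.1 hC
  have hl' : ∀ x ∈ l, PQFormula A B x ∧ x.depth ≤ k := by
    intro x hx
    have hx2 : x ∈ ats.sublists.map conjList := (List.mem_sublists.1 hl).subset hx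
    obtain ⟨s, hs, rfl⟩ := List.mem_map.1 hx2
    have hs' : ∀ a ∈ s, PQFormula A B a ∧ a.depth ≤ k :=
      fun a ha => h a ((List.mem_sublists.1 hs).subset ha)
    refine ⟨⟨?_, ?_⟩, ?_⟩
    · exact vsgn_conjList (fun a ha => (hs' a ha).1.1)
    · exact vsgn_conjList (fun a ha => (hs' a ha).1.2)
    · exact depth_conjList (fun a ha => (hs' a ha).2)
  refine ⟨⟨?_, ?_⟩, ?_⟩
  · exact vsgn_disjList (fun x hx => (hl' x hx).1.1)
  · exact vsgn_disjList (fun x hx => (hl' x hx).1.2)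
  · exact depth_disjList (fun x hx => (hl' x hx).2)

theorem LL_good : ∀ (k : ℕ) (A B : Finset ℕ), ∀ C ∈ LL k A B,
    PQFormula A B C ∧ C.depth ≤ k := by
  intro k
  induction k with
  | zero =>
      intro A B
      exact mkDNF_good (fun a ha => ⟨(baseAtoms_good ha).1, le_of_eq (baseAtoms_good ha).2⟩)
  | succ k ih =>
      intro A B
      apply mkDNF_good
      intro a ha
      rcases List.mem_append.1 ha with h | h
      · rcases List.mem_append.1 h with h' | h'
        · exact ⟨(baseAtoms_good h').1, le_trans (le_of_eq (baseAtoms_good h').2) (by omega)⟩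
        · obtain ⟨C, hC, rfl⟩ := List.mem_map.1 h'
          obtain ⟨hPQ, hd⟩ := ih A B C hC
          exact ⟨⟨hPQ.1, hPQ.2⟩, by simpa [depth] using hd⟩
      · obtain ⟨C, hC, rfl⟩ := List.mem_map.1 h
        obtain ⟨hPQ, hd⟩ := ih A B C hC
        refine ⟨⟨?_, ?_⟩, ?_⟩
        · simpa [Formula.vpos, vsgn_dia] using hPQ.1
        · simpa [Formula.vneg, vsgn_dia] using hPQ.2
        · simpa [depth_dia] using hd

theorem atoms_good : ∀ (k : ℕ) (A B : Finset ℕ), ∀ a ∈ atoms k A B,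
    PQFormula A B a ∧ a.depth ≤ k := by
  intro k A B a ha
  cases k with
  | zero => exact ⟨(baseAtoms_good ha).1, le_of_eq (baseAtoms_good ha).2⟩
  | succ k =>
      rcases List.mem_append.1 ha with h | h
      · rcases List.mem_append.1 h with h' | h'
        · exact ⟨(baseAtoms_good h').1, le_trans (le_of_eq (baseAtoms_good h').2) (by omega)⟩
        · obtain ⟨C, hC, rfl⟩ := List.mem_map.1 h'
          obtain ⟨hPQ, hd⟩ := LL_good k A B C hC
          exact ⟨⟨hPQ.1, hPQ.2⟩, by simpa [depth] using hd⟩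
      · obtain ⟨C, hC, rfl⟩ := List.mem_map.1 h
        obtain ⟨hPQ, hd⟩ := LL_good k A B C hC
        refine ⟨⟨?_, ?_⟩, ?_⟩
        · simpa [Formula.vpos, vsgn_dia] using hPQ.1
        · simpa [Formula.vneg, vsgn_dia] using hPQ.2
        · simpa [depth_dia] using hd

/-- The layered transfer statement. -/
def Tstmt (k : ℕ) : Prop :=
  ∀ (A B : Finset ℕ) (χ : Formula), PQFormula A B χ → χ.depth ≤ k →
    ∀ (M : KripkeModel) (w : M.W) (M' : KripkeModel) (w' : M'.W),
      (∀ a ∈ atoms k A B, M.Sat a w → M'.Sat a w') → M.Sat χ w → M'.Sat χ w'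

/-- The representability statement. -/
def Pstmt (k : ℕ) : Prop :=
  ∀ (A B : Finset ℕ) (χ : Formula), PQFormula A B χ → χ.depth ≤ k →
    ∃ C ∈ LL k A B, Eqv χ C

theorem transfer_aux (k : ℕ) (prevP : ∀ k', k = k' + 1 → Pstmt k') : Tstmt k := by
  intro A B χ
  induction χ generalizing A B with
  | var p =>
      intro hPQ _ M w M' w' H hs
      have hpA : p ∈ A := by
        have := hPQ.1
        simp [Formula.vpos, vsgn] at this
        exact this
      have hmem : Formula.var p ∈ atoms k A B := by
        have hbase : Formula.var p ∈ baseAtoms A B :=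
          List.mem_append_left _ (List.mem_map.2 ⟨p, Finset.mem_toList.2 hpA, rfl⟩)
        cases k with
        | zero => exact hbase
        | succ k => exact List.mem_append_left _ (List.mem_append_left _ hbase)
      exact H _ hmem hs
  | bot => intro _ _ M w M' w' _ hs; exact absurd hs (by simp [sat_bot])
  | imp α β ihα ihβ =>
      intro hPQ hd M w M' w' H hs hα'
      -- swapped atom transfer
      have Hsw : ∀ a ∈ atoms k B A, M'.Sat a w' → M.Sat a w := by
        intro a ha
        have hbase_case : ∀ a₀ ∈ baseAtoms B A, M'.Sat a₀ w' → M.Sat a₀ w := by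
          intro a₀ ha₀
          rcases List.mem_append.1 ha₀ with h | h
          · obtain ⟨q, hq, rfl⟩ := List.mem_map.1 h
            have hqB : q ∈ B := Finset.mem_toList.1 hq
            have hmem : (Formula.var q).neg ∈ atoms k A B := by
              have hb : (Formula.var q).neg ∈ baseAtoms A B :=
                List.mem_append_right _ (List.mem_map.2 ⟨q, Finset.mem_toList.2 hqB, rfl⟩)
              cases k with
              | zero => exact hb
              | succ k => exact List.mem_append_left _ (List.mem_append_left _ hb)
            intro hsat
            by_contra hnot
            exact (H _ hmem ((sat_neg M _ w).2 hnot)) hsat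
          · obtain ⟨p, hp, rfl⟩ := List.mem_map.1 h
            have hpA : p ∈ A := Finset.mem_toList.1 hp
            have hmem : Formula.var p ∈ atoms k A B := by
              have hb : Formula.var p ∈ baseAtoms A B :=
                List.mem_append_left _ (List.mem_map.2 ⟨p, Finset.mem_toList.2 hpA, rfl⟩)
              cases k with
              | zero => exact hb
              | succ k => exact List.mem_append_left _ (List.mem_append_left _ hb)
            intro hsat
            rw [sat_neg] at hsat ⊢
            intro hpw
            exact hsat (H _ hmem hpw)
        cases k with
        | zero => exact hbase_case a ha
        | succ k =>
            rcases List.mem_append.1 ha with h | h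
            · rcases List.mem_append.1 h with h' | h'
              · exact hbase_case a h'
              · -- a = box C with C ∈ LL k B A
                obtain ⟨C, hC, rfl⟩ := List.mem_map.1 h'
                obtain ⟨hCPQ, hCd⟩ := LL_good k B A C hC
                have hnegPQ : PQFormula A B C.neg := by
                  constructor
                  · simpa [Formula.vpos, Formula.vneg, vsgn_neg] using hCPQ.2
                  · simpa [Formula.vpos, Formula.vneg, vsgn_neg] using hCPQ.1
                obtain ⟨C'', hC''mem, hEqv⟩ := prevP k rfl A B C.neg hnegPQ
                  (by simpa [depth_neg] using hCd)
                have hdia_mem : C''.dia ∈ atoms (k+1) A B :=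
                  List.mem_append_right _ (List.mem_map.2 ⟨C'', hC''mem, rfl⟩)
                have key : ∀ (N : KripkeModel) (x : N.W),
                    N.Sat C''.dia x ↔ ¬ N.Sat C.box x := by
                  intro N x
                  rw [sat_dia, sat_box]
                  push_neg
                  constructor
                  · rintro ⟨y, hy, hsy⟩
                    exact ⟨y, hy, (sat_neg N C y).1 ((hEqv N y).2 hsy)⟩
                  · rintro ⟨y, hy, hsy⟩
                    exact ⟨y, hy, (hEqv N y).1 ((sat_neg N C y).2 hsy)⟩
                intro hsat
                by_contra hnot
                have : M.Sat C''.dia w := (key M w).2 hnot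
                exact ((key M' w').1 (H _ hdia_mem this)) hsat
            · -- a = dia C with C ∈ LL k B A
              obtain ⟨C, hC, rfl⟩ := List.mem_map.1 h
              obtain ⟨hCPQ, hCd⟩ := LL_good k B A C hC
              have hnegPQ : PQFormula A B C.neg := by
                constructor
                · simpa [Formula.vpos, Formula.vneg, vsgn_neg] using hCPQ.2
                · simpa [Formula.vpos, Formula.vneg, vsgn_neg] using hCPQ.1
              obtain ⟨C'', hC''mem, hEqv⟩ := prevP k rfl A B C.neg hnegPQ
                (by simpa [depth_neg] using hCd)
              have hbox_mem : C''.box ∈ atoms (k+1) A B :=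
                List.mem_append_left _ (List.mem_append_right _
                  (List.mem_map.2 ⟨C'', hC''mem, rfl⟩))
              have key : ∀ (N : KripkeModel) (x : N.W),
                  N.Sat C''.box x ↔ ¬ N.Sat C.dia x := by
                intro N x
                rw [sat_dia, sat_box]
                push_neg
                constructor
                · intro hall y hy hsy
                  exact (sat_neg N C y).1 ((hEqv N y).2 (hall y hy)) hsy
                · intro hall y hy
                  exact (hEqv N y).1 ((sat_neg N C y).2 (hall y hy))
              intro hsat
              by_contra hnot
              have : M.Sat C''.box w := (key M w).2 hnot
              exact ((key M' w').1 (H _ hbox_mem this)) hsat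
      have hαPQ : PQFormula B A α := by
        constructor
        · exact le_trans (Finset.subset_union_left) hPQ.2
        · exact le_trans (Finset.subset_union_left) hPQ.1
      have hβPQ : PQFormula A B β := by
        constructor
        · exact le_trans (Finset.subset_union_right) hPQ.1
        · exact le_trans (Finset.subset_union_right) hPQ.2
      have hdα : α.depth ≤ k := le_trans (le_max_left _ _) hd
      have hdβ : β.depth ≤ k := le_trans (le_max_right _ _) hd
      have hα : M.Sat α w := ihα B A hαPQ hdα M' w' M w Hsw hα'
      exact ihβ A B hβPQ hdβ M w M' w' H (hs hα)
  | box α ihα =>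
      intro hPQ hd M w M' w' H hs
      cases k with
      | zero => exact absurd hd (by simp [depth])
      | succ k =>
          have hαPQ : PQFormula A B α := ⟨hPQ.1, hPQ.2⟩
          have hdα : α.depth ≤ k := by
            have : α.depth + 1 ≤ k + 1 := hd
            omega
          obtain ⟨C, hCmem, hEqv⟩ := prevP k rfl A B α hαPQ hdα
          have hbox_mem : C.box ∈ atoms (k+1) A B :=
            List.mem_append_left _ (List.mem_append_right _
              (List.mem_map.2 ⟨C, hCmem, rfl⟩))
          have h1 : M.Sat C.box w := fun y hy => (hEqv M y).1 (hs y hy)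
          have h2 := H _ hbox_mem h1
          exact fun y hy => (hEqv M' y).2 (h2 y hy)

theorem repr_of_transfer (k : ℕ) (T : Tstmt k) : Pstmt k := by
  intro A B χ hPQ hd
  set cond : List Formula → Prop :=
    fun s => ∀ (M' : KripkeModel) (w' : M'.W), M'.Sat (conjList s) w' → M'.Sat χ w'
    with hcond
  set goodlist : List Formula :=
    ((atoms k A B).sublists.filter (fun s => cond s)).map conjList with hgood
  refine ⟨disjList goodlist, ?_, ?_⟩
  · rw [LL_eq]
    apply List.mem_map_of_mem
    rw [List.mem_sublists]
    exact (List.filter_sublist).map conjList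
  · intro M w
    rw [sat_disjList]
    constructor
    · intro hs
      set sw : List Formula := (atoms k A B).filter (fun a => M.Sat a w) with hsw
      refine ⟨conjList sw, ?_, ?_⟩
      · apply List.mem_map_of_mem
        rw [List.mem_filter]
        constructor
        · exact List.mem_sublists.2 (List.filter_sublist)
        · rw [decide_eq_true_iff]
          intro M' w' hcw'
          apply T A B χ hPQ hd M w M' w'
          · intro a ha hsa
            have hain : a ∈ sw := List.mem_filter.2 ⟨ha, decide_eq_true hsa⟩
            exact (sat_conjList M' sw w').1 hcw' a hain
          · exact hs
      · rw [sat_conjList]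
        intro x hx
        exact of_decide_eq_true (List.mem_filter.1 hx).2
    · rintro ⟨x, hx, hsx⟩
      obtain ⟨s, hsmem, rfl⟩ := List.mem_map.1 hx
      have hc : cond s := by
        have := List.of_mem_filter hsmem
        exact of_decide_eq_true this
      exact hc M w hsx

theorem TP : ∀ k : ℕ, Tstmt k ∧ Pstmt k := by
  intro k
  induction k with
  | zero =>
      have T0 : Tstmt 0 := transfer_aux 0 (fun k' h => absurd h (by omega))
      exact ⟨T0, repr_of_transfer 0 T0⟩
  | succ k ih =>
      have T1 : Tstmt (k+1) := transfer_aux (k+1) (fun k' h => by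
        have : k' = k := by omega
        subst this
        exact ih.2)
      exact ⟨T1, repr_of_transfer (k+1) T1⟩

end KProof
namespace KProof
open Formula

attribute [local instance] Classical.propDecidable

theorem vpos_imp (α β : Formula) : (α.imp β).vpos = α.vneg ∪ β.vpos := rfl
theorem vneg_imp (α β : Formula) : (α.imp β).vneg = α.vpos ∪ β.vneg := rfl
theorem vpos_box (α : Formula) : α.box.vpos = α.vpos := rfl
theorem vneg_box (α : Formula) : α.box.vneg = α.vneg := rfl
theorem vpos_var (p : ℕ) : (Formula.var p).vpos = {p} := rfl
theorem vneg_var (p : ℕ) : (Formula.var p).vneg = ∅ := rfl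

/-- Signed bisimulation transfer (unbounded depth). -/
theorem bisim_transfer (M₁ M₂ : KripkeModel) (A B : Finset ℕ) (R : M₁.W → M₂.W → Prop)
    (hval₁ : ∀ w₁ w₂, R w₁ w₂ → ∀ p ∈ A, M₁.val w₁ p → M₂.val w₂ p)
    (hval₂ : ∀ w₁ w₂, R w₁ w₂ → ∀ p ∈ B, M₂.val w₂ p → M₁.val w₁ p)
    (hforth : ∀ w₁ w₂, R w₁ w₂ → ∀ x₁, M₁.rel w₁ x₁ → ∃ x₂, M₂.rel w₂ x₂ ∧ R x₁ x₂)
    (hback : ∀ w₁ w₂, R w₁ w₂ → ∀ x₂, M₂.rel w₂ x₂ → ∃ x₁, M₁.rel w₁ x₁ ∧ R x₁ x₂) :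
    ∀ (χ : Formula) (w₁ : M₁.W) (w₂ : M₂.W), R w₁ w₂ →
      (χ.vpos ⊆ A → χ.vneg ⊆ B → M₁.Sat χ w₁ → M₂.Sat χ w₂) ∧
      (χ.vpos ⊆ B → χ.vneg ⊆ A → M₂.Sat χ w₂ → M₁.Sat χ w₁) := by
  intro χ
  induction χ with
  | var p =>
      intro w₁ w₂ hR
      constructor
      · intro h1 _ hs
        exact hval₁ w₁ w₂ hR p (h1 (by simp [vpos_var])) hs
      · intro h1 _ hs
        exact hval₂ w₁ w₂ hR p (h1 (by simp [vpos_var])) hs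
  | bot => intro w₁ w₂ _; exact ⟨fun _ _ h => h.elim, fun _ _ h => h.elim⟩
  | imp α β ihα ihβ =>
      intro w₁ w₂ hR
      constructor
      · intro h1 h2 hs hα₂
        rw [vpos_imp] at h1; rw [vneg_imp] at h2
        have hα₁ : M₁.Sat α w₁ :=
          (ihα w₁ w₂ hR).2 (le_trans Finset.subset_union_left h2)
            (le_trans Finset.subset_union_left h1) hα₂
        exact (ihβ w₁ w₂ hR).1 (le_trans Finset.subset_union_right h1)
          (le_trans Finset.subset_union_right h2) (hs hα₁)
      · intro h1 h2 hs hα₁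
        rw [vpos_imp] at h1; rw [vneg_imp] at h2
        have hα₂ : M₂.Sat α w₂ :=
          (ihα w₁ w₂ hR).1 (le_trans Finset.subset_union_left h2)
            (le_trans Finset.subset_union_left h1) hα₁
        exact (ihβ w₁ w₂ hR).2 (le_trans Finset.subset_union_right h1)
          (le_trans Finset.subset_union_right h2) (hs hα₂)
  | box α ihα =>
      intro w₁ w₂ hR
      constructor
      · intro h1 h2 hs x₂ hx₂
        obtain ⟨x₁, hx₁, hR'⟩ := hback w₁ w₂ hR x₂ hx₂
        exact (ihα x₁ x₂ hR').1 h1 h2 (hs x₁ hx₁)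
      · intro h1 h2 hs x₁ hx₁
        obtain ⟨x₂, hx₂, hR'⟩ := hforth w₁ w₂ hR x₁ hx₁
        exact (ihα x₁ x₂ hR').2 h1 h2 (hs x₂ hx₂)

/-- Signed layered bisimulation transfer (bounded depth). -/
theorem layered_transfer (M₁ M₂ : KripkeModel) (A B : Finset ℕ)
    (R : M₁.W → ℕ → M₂.W → Prop)
    (hval₁ : ∀ w₁ k w₂, R w₁ k w₂ → ∀ p ∈ A, M₁.val w₁ p → M₂.val w₂ p)
    (hval₂ : ∀ w₁ k w₂, R w₁ k w₂ → ∀ p ∈ B, M₂.val w₂ p → M₁.val w₁ p)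
    (hforth : ∀ w₁ k w₂, R w₁ (k+1) w₂ → ∀ x₁, M₁.rel w₁ x₁ →
      ∃ x₂, M₂.rel w₂ x₂ ∧ R x₁ k x₂)
    (hback : ∀ w₁ k w₂, R w₁ (k+1) w₂ → ∀ x₂, M₂.rel w₂ x₂ →
      ∃ x₁, M₁.rel w₁ x₁ ∧ R x₁ k x₂) :
    ∀ (χ : Formula) (k : ℕ) (w₁ : M₁.W) (w₂ : M₂.W), R w₁ k w₂ → χ.depth ≤ k →
      (χ.vpos ⊆ A → χ.vneg ⊆ B → M₁.Sat χ w₁ → M₂.Sat χ w₂) ∧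
      (χ.vpos ⊆ B → χ.vneg ⊆ A → M₂.Sat χ w₂ → M₁.Sat χ w₁) := by
  intro χ
  induction χ with
  | var p =>
      intro k w₁ w₂ hR _
      constructor
      · intro h1 _ hs
        exact hval₁ w₁ k w₂ hR p (h1 (by simp [vpos_var])) hs
      · intro h1 _ hs
        exact hval₂ w₁ k w₂ hR p (h1 (by simp [vpos_var])) hs
  | bot => intro k w₁ w₂ _ _; exact ⟨fun _ _ h => h.elim, fun _ _ h => h.elim⟩
  | imp α β ihα ihβ =>
      intro k w₁ w₂ hR hd
      have hdα : α.depth ≤ k := le_trans (le_max_left _ _) hd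
      have hdβ : β.depth ≤ k := le_trans (le_max_right _ _) hd
      constructor
      · intro h1 h2 hs hα₂
        rw [vpos_imp] at h1; rw [vneg_imp] at h2
        have hα₁ : M₁.Sat α w₁ :=
          (ihα k w₁ w₂ hR hdα).2 (le_trans Finset.subset_union_left h2)
            (le_trans Finset.subset_union_left h1) hα₂
        exact (ihβ k w₁ w₂ hR hdβ).1 (le_trans Finset.subset_union_right h1)
          (le_trans Finset.subset_union_right h2) (hs hα₁)
      · intro h1 h2 hs hα₁
        rw [vpos_imp] at h1; rw [vneg_imp] at h2
        have hα₂ : M₂.Sat α w₂ :=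
          (ihα k w₁ w₂ hR hdα).1 (le_trans Finset.subset_union_left h2)
            (le_trans Finset.subset_union_left h1) hα₁
        exact (ihβ k w₁ w₂ hR hdβ).2 (le_trans Finset.subset_union_right h1)
          (le_trans Finset.subset_union_right h2) (hs hα₂)
  | box α ihα =>
      intro k w₁ w₂ hR hd
      cases k with
      | zero => exact absurd hd (by simp [depth])
      | succ k =>
          have hdα : α.depth ≤ k := by
            have : α.depth + 1 ≤ k + 1 := hd
            omega
          constructor
          · intro h1 h2 hs x₂ hx₂
            obtain ⟨x₁, hx₁, hR'⟩ := hback w₁ k w₂ hR x₂ hx₂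
            exact (ihα k x₁ x₂ hR' hdα).1 h1 h2 (hs x₁ hx₁)
          · intro h1 h2 hs x₁ hx₁
            obtain ⟨x₂, hx₂, hR'⟩ := hforth w₁ k w₂ hR x₁ hx₁
            exact (ihα k x₁ x₂ hR' hdα).2 h1 h2 (hs x₂ hx₂)

/-- The amalgamated model. -/
noncomputable def amalgam (N M : KripkeModel) (Z : N.W → ℕ → M.W → Prop)
    (Aφ Bψ : Finset ℕ) : KripkeModel where
  W := (N.W × ℕ × M.W) ⊕ M.W
  nonempty := ⟨Sum.inr M.nonempty.some⟩
  rel s t :=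
    match s, t with
    | .inl (x, k, y), .inl (x', k', y') => k = k' + 1 ∧ N.rel x x' ∧ M.rel y y' ∧ Z x' k' y'
    | .inl (_, k, y), .inr y' => k = 0 ∧ M.rel y y'
    | .inr y, .inr y' => M.rel y y'
    | .inr _, .inl _ => False
  val s p :=
    match s with
    | .inl (x, _, y) => (N.val x p ∧ p ∈ Aφ) ∨ (M.val y p ∧ p ∈ Bψ)
    | .inr y => M.val y p

end KProof
namespace KProof
open Formula

attribute [local instance] Classical.propDecidable

theorem main_interp (φ : Formula) (P Q : Finset ℕ) :
    ∃ θ : Formula, IsULInterpolant TheoryK φ P Q θ ∧ θ.depth ≤ φ.depth := by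
  set Sp : Finset ℕ := φ.vpos \ P with hSp
  set Sn : Finset ℕ := φ.vneg \ Q with hSn
  set n : ℕ := φ.depth with hn
  set Lbig : List Formula := ((LL n Sp Sn).sublists).map disjList with hLbig
  have hLbig_good : ∀ E ∈ Lbig, PQFormula Sp Sn E ∧ E.depth ≤ n := by
    intro E hE
    obtain ⟨l, hl, rfl⟩ := List.mem_map.1 hE
    have hl' : ∀ x ∈ l, PQFormula Sp Sn x ∧ x.depth ≤ n :=
      fun x hx => LL_good n Sp Sn x ((List.mem_sublists.1 hl).subset hx)
    exact ⟨⟨vsgn_disjList (fun x hx => (hl' x hx).1.1),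
      vsgn_disjList (fun x hx => (hl' x hx).1.2)⟩,
      depth_disjList (fun x hx => (hl' x hx).2)⟩
  set θ : Formula := conjList (Lbig.filter (fun E => Prov (φ.imp E))) with hθ
  have hθconj : ∀ E ∈ Lbig.filter (fun E => Prov (φ.imp E)), PQFormula Sp Sn E ∧ E.depth ≤ n :=
    fun E hE => hLbig_good E (List.mem_of_mem_filter hE)
  refine ⟨θ, ⟨?_, ?_, ?_, ?_⟩, ?_⟩
  · exact vsgn_conjList (fun E hE => (hθconj E hE).1.1)
  · exact vsgn_conjList (fun E hE => (hθconj E hE).1.2)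
  · rw [theoryK_eq]
    exact prov_imp_conjList
      (fun E hE => of_decide_eq_true (List.mem_filter.1 hE).2)
  · -- the universal property
    intro ψ hpos hneg hprovψ
    rw [theoryK_eq] at hprovψ ⊢
    show Prov (θ.imp ψ)
    by_contra hnp
    -- Step 1: a model of θ ∧ ¬ψ
    have hcons1 : ¬ Prov ((θ.imp ψ).neg.neg) := by
      intro hpp
      apply hnp
      refine Prov.mp ?_ hpp
      apply Prov.taut; intro v h0 h1
      simp only [Formula.neg, h1, h0]
      cases v θ <;> cases v ψ <;> rfl
    obtain ⟨M, w, hMw⟩ := satisfiable_of_not_prov_neg hcons1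
    rw [sat_neg, sat_imp] at hMw
    push_neg at hMw
    obtain ⟨hθw, hψw⟩ := hMw
    -- Step 2: a model of φ together with the negations of the members of LL false at w
    set lf : List Formula := (LL n Sp Sn).filter (fun C => ¬ M.Sat C w) with hlf
    have hγcons : ¬ Prov (φ.and (conjList (lf.map Formula.neg))).neg := by
      intro hP
      have hImp : Prov (φ.imp (disjList lf)) := Prov.mp (prov_negconj φ lf) hP
      have hE : disjList lf ∈ Lbig :=
        List.mem_map_of_mem (List.mem_sublists.2 (List.filter_sublist))
      have hEθ : disjList lf ∈ Lbig.filter (fun E => Prov (φ.imp E)) :=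
        List.mem_filter.2 ⟨hE, decide_eq_true hImp⟩
      have hsatE : M.Sat (disjList lf) w := (sat_conjList M _ w).1 hθw _ hEθ
      obtain ⟨C, hClf, hCw⟩ := (sat_disjList M lf w).1 hsatE
      exact (of_decide_eq_true (List.mem_filter.1 hClf).2) hCw
    obtain ⟨N, u, hNu⟩ := satisfiable_of_not_prov_neg hγcons
    rw [sat_and] at hNu
    obtain ⟨hφu, hconju⟩ := hNu
    have hCu : ∀ C ∈ lf, ¬ N.Sat C u := by
      intro C hC
      have := (sat_conjList N _ u).1 hconju C.neg (List.mem_map_of_mem hC)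
      exact (sat_neg N C u).1 this
    -- Step 3: the layered simulation Z
    set Z : N.W → ℕ → M.W → Prop := fun x k y =>
      ∀ χ' : Formula, PQFormula Sp Sn χ' → χ'.depth ≤ k → N.Sat χ' x → M.Sat χ' y with hZ
    have hZun : Z u n w := by
      intro χ' hPQ hd hsu
      obtain ⟨C, hC, hEqv⟩ := (TP n).2 Sp Sn χ' hPQ hd
      have hCu' : N.Sat C u := (hEqv N u).1 hsu
      by_contra hnot
      have hnC : ¬ M.Sat C w := fun hc => hnot ((hEqv M w).2 hc)
      exact hCu C (List.mem_filter.2 ⟨hC, decide_eq_true hnC⟩) hCu'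
    have hZforth : ∀ x k y, Z x (k+1) y → ∀ x', N.rel x x' →
        ∃ y', M.rel y y' ∧ Z x' k y' := by
      intro x k y hxy x' hrel
      set lC : List Formula := (LL k Sp Sn).filter (fun D => N.Sat D x') with hlC
      have hPQC : PQFormula Sp Sn (conjList lC).dia := by
        constructor
        · rw [Formula.vpos, vsgn_dia]
          exact vsgn_conjList (fun D hD => (LL_good k Sp Sn D (List.mem_of_mem_filter hD)).1.1)
        · rw [Formula.vneg, vsgn_dia]
          exact vsgn_conjList (fun D hD => (LL_good k Sp Sn D (List.mem_of_mem_filter hD)).1.2)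
      have hdC : (conjList lC).dia.depth ≤ k + 1 := by
        rw [depth_dia]
        have := depth_conjList (l := lC) (n := k)
          (fun D hD => (LL_good k Sp Sn D (List.mem_of_mem_filter hD)).2)
        omega
      have hsatx : N.Sat (conjList lC).dia x := by
        rw [sat_dia]
        refine ⟨x', hrel, ?_⟩
        rw [sat_conjList]
        intro D hD
        exact of_decide_eq_true (List.mem_filter.1 hD).2
      have hsaty := hxy (conjList lC).dia hPQC hdC hsatx
      rw [sat_dia] at hsaty
      obtain ⟨y', hrel', hCy'⟩ := hsaty
      refine ⟨y', hrel', ?_⟩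
      intro χ' hPQ' hd' hs'
      obtain ⟨D, hD, hEqv⟩ := (TP k).2 Sp Sn χ' hPQ' hd'
      have hDx : N.Sat D x' := (hEqv N x').1 hs'
      have hDlC : D ∈ lC := List.mem_filter.2 ⟨hD, decide_eq_true hDx⟩
      exact (hEqv M y').2 ((sat_conjList M lC y').1 hCy' D hDlC)
    have hZback : ∀ x k y, Z x (k+1) y → ∀ y', M.rel y y' →
        ∃ x', N.rel x x' ∧ Z x' k y' := by
      intro x k y hxy y' hrel
      by_cases hex : ∃ x', N.rel x x' ∧ Z x' k y'
      · exact hex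
      exfalso
      push_neg at hex
      set lB : List Formula := (LL k Sp Sn).filter (fun D => ¬ M.Sat D y') with hlB
      have hPQB : PQFormula Sp Sn (disjList lB).box := by
        constructor
        · rw [Formula.vpos, vsgn_box]
          exact vsgn_disjList (fun D hD => (LL_good k Sp Sn D (List.mem_of_mem_filter hD)).1.1)
        · rw [Formula.vneg, vsgn_box]
          exact vsgn_disjList (fun D hD => (LL_good k Sp Sn D (List.mem_of_mem_filter hD)).1.2)
      have hdB : (disjList lB).box.depth ≤ k + 1 := by
        show (disjList lB).depth + 1 ≤ k + 1
        have := depth_disjList (l := lB) (n := k)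
          (fun D hD => (LL_good k Sp Sn D (List.mem_of_mem_filter hD)).2)
        omega
      have hsatx : N.Sat (disjList lB).box x := by
        rw [sat_box]
        intro x' hrel'
        have hnZ := hex x' hrel'
        have hnZ' : ∃ χ' : Formula, PQFormula Sp Sn χ' ∧ χ'.depth ≤ k ∧
            N.Sat χ' x' ∧ ¬ M.Sat χ' y' := by
          by_contra hno
          push_neg at hno
          exact hnZ (fun χ' h1 h2 h3 => hno χ' h1 h2 h3)
        obtain ⟨χ', hPQ', hd', hsx', hnsy'⟩ := hnZ'
        obtain ⟨D, hD, hEqv⟩ := (TP k).2 Sp Sn χ' hPQ' hd'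
        have hDx : N.Sat D x' := (hEqv N x').1 hsx'
        have hnDy : ¬ M.Sat D y' := fun hc => hnsy' ((hEqv M y').2 hc)
        rw [sat_disjList]
        exact ⟨D, List.mem_filter.2 ⟨hD, decide_eq_true hnDy⟩, hDx⟩
      have hsaty := hxy (disjList lB).box hPQB hdB hsatx
      rw [sat_box] at hsaty
      have hsatB := hsaty y' hrel
      rw [sat_disjList] at hsatB
      obtain ⟨D, hDlB, hDy⟩ := hsatB
      exact (of_decide_eq_true (List.mem_filter.1 hDlB).2) hDy
    -- Step 4: the amalgamated model
    set Mst : KripkeModel := amalgam N M Z φ.vpos ψ.vneg with hMst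
    set root : Mst.W := Sum.inl (u, n, w) with hroot
    have hpos' : ∀ p ∈ ψ.vpos, p ∉ P := by
      intro p hp hpP
      have : p ∈ ψ.vpos ∩ P := Finset.mem_inter.2 ⟨hp, hpP⟩
      rw [hpos] at this
      exact absurd this (Finset.notMem_empty p)
    have hneg' : ∀ p ∈ ψ.vneg, p ∉ Q := by
      intro p hp hpQ
      have : p ∈ ψ.vneg ∩ Q := Finset.mem_inter.2 ⟨hp, hpQ⟩
      rw [hneg] at this
      exact absurd this (Finset.notMem_empty p)
    -- the full bisimulation between Mst and M
    set R2 : Mst.W → M.W → Prop := fun s y =>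
      (∃ x k, s = Sum.inl (x, k, y) ∧ Z x k y) ∨ s = Sum.inr y with hR2
    have hR2val₁ : ∀ s y, R2 s y → ∀ p ∈ ψ.vpos, Mst.val s p → M.val y p := by
      intro s y hR p hp hval
      rcases hR with ⟨x, k, rfl, hZxy⟩ | rfl
      · rcases hval with ⟨hN, hpφ⟩ | ⟨hM, _⟩
        · have hpSp : p ∈ Sp := Finset.mem_sdiff.2 ⟨hpφ, hpos' p hp⟩
          have := hZxy (Formula.var p)
            ⟨by simpa [vpos_var] using hpSp, by simp [Formula.vneg, vsgn]⟩
            (by simp [depth]) hN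
          exact this
        · exact hM
      · exact hval
    have hR2val₂ : ∀ s y, R2 s y → ∀ p ∈ ψ.vneg, M.val y p → Mst.val s p := by
      intro s y hR p hp hval
      rcases hR with ⟨x, k, rfl, hZxy⟩ | rfl
      · exact Or.inr ⟨hval, hp⟩
      · exact hval
    have hR2forth : ∀ s y, R2 s y → ∀ t, Mst.rel s t → ∃ y₂, M.rel y y₂ ∧ R2 t y₂ := by
      intro s y hR t hrel
      rcases hR with ⟨x, k, rfl, hZxy⟩ | rfl
      · cases t with
        | inl a =>
            obtain ⟨x', k', y'⟩ := a
            obtain ⟨hk, hN, hM, hZ'⟩ := hrel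
            exact ⟨y', hM, Or.inl ⟨x', k', rfl, hZ'⟩⟩
        | inr y' =>
            obtain ⟨hk, hM⟩ := hrel
            exact ⟨y', hM, Or.inr rfl⟩
      · cases t with
        | inl a => exact absurd hrel (by exact fun h => h)
        | inr y' => exact ⟨y', hrel, Or.inr rfl⟩
    have hR2back : ∀ s y, R2 s y → ∀ y₂, M.rel y y₂ → ∃ t, Mst.rel s t ∧ R2 t y₂ := by
      intro s y hR y₂ hrel
      rcases hR with ⟨x, k, rfl, hZxy⟩ | rfl
      · cases k with
        | zero => exact ⟨Sum.inr y₂, ⟨rfl, hrel⟩, Or.inr rfl⟩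
        | succ k₀ =>
            obtain ⟨x', hNrel, hZ'⟩ := hZback x k₀ y hZxy y₂ hrel
            exact ⟨Sum.inl (x', k₀, y₂), ⟨rfl, hNrel, hrel, hZ'⟩,
              Or.inl ⟨x', k₀, rfl, hZ'⟩⟩
      · exact ⟨Sum.inr y₂, hrel, Or.inr rfl⟩
    -- the layered bisimulation between N and Mst
    set R1 : N.W → ℕ → Mst.W → Prop := fun x j s =>
      ∃ k y, s = Sum.inl (x, k, y) ∧ Z x k y ∧ j ≤ k with hR1
    have hR1val₁ : ∀ x j s, R1 x j s → ∀ p ∈ φ.vpos, N.val x p → Mst.val s p := by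
      rintro x j s ⟨k, y, rfl, hZxy, hjk⟩ p hp hval
      exact Or.inl ⟨hval, hp⟩
    have hR1val₂ : ∀ x j s, R1 x j s → ∀ p ∈ φ.vneg, Mst.val s p → N.val x p := by
      rintro x j s ⟨k, y, rfl, hZxy, hjk⟩ p hp hval
      rcases hval with ⟨hN, _⟩ | ⟨hM, hpψ⟩
      · exact hN
      · have hpSn : p ∈ Sn := Finset.mem_sdiff.2 ⟨hp, hneg' p hpψ⟩
        by_contra hnx
        have hnegsat : N.Sat (Formula.var p).neg x := by
          rw [sat_neg]
          exact hnx
        have := hZxy (Formula.var p).neg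
          ⟨by simp [Formula.vpos, vsgn_neg, vsgn], by
            simpa [Formula.vneg, vsgn_neg, vsgn] using hpSn⟩
          (by simp [depth_neg, depth]) hnegsat
        rw [sat_neg] at this
        exact this hM
    have hR1forth : ∀ x j s, R1 x (j+1) s → ∀ x₁, N.rel x x₁ →
        ∃ t, Mst.rel s t ∧ R1 x₁ j t := by
      rintro x j s ⟨k, y, rfl, hZxy, hjk⟩ x₁ hrel
      cases k with
      | zero => omega
      | succ k₀ =>
          obtain ⟨y', hMrel, hZ'⟩ := hZforth x k₀ y hZxy x₁ hrel
          exact ⟨Sum.inl (x₁, k₀, y'), ⟨rfl, hrel, hMrel, hZ'⟩,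
            ⟨k₀, y', rfl, hZ', by omega⟩⟩
    have hR1back : ∀ x j s, R1 x (j+1) s → ∀ t, Mst.rel s t →
        ∃ x₁, N.rel x x₁ ∧ R1 x₁ j t := by
      rintro x j s ⟨k, y, rfl, hZxy, hjk⟩ t hrel
      cases t with
      | inl a =>
          obtain ⟨x', k', y'⟩ := a
          obtain ⟨hk, hNrel, hMrel, hZ'⟩ := hrel
          exact ⟨x', hNrel, ⟨k', y', rfl, hZ', by omega⟩⟩
      | inr y' =>
          obtain ⟨hk, hMrel⟩ := hrel
          omega
    -- conclude
    have hR1root : R1 u n root := ⟨n, w, rfl, hZun, le_refl n⟩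
    have hφroot : Mst.Sat φ root :=
      (layered_transfer N Mst φ.vpos φ.vneg R1 hR1val₁ hR1val₂ hR1forth hR1back
        φ n u root hR1root (le_refl n)).1 (le_refl _) (le_refl _) hφu
    have hR2root : R2 root w := Or.inl ⟨u, n, rfl, hZun⟩
    have hψroot : Mst.Sat ψ root := sound hprovψ Mst root hφroot
    have hψw' : M.Sat ψ w :=
      (bisim_transfer Mst M ψ.vpos ψ.vneg R2 hR2val₁ hR2val₂ hR2forth hR2back
        ψ root w hR2root).1 (le_refl _) (le_refl _) hψroot
    exact hψw hψw'
  · exact depth_conjList (fun E hE => (hθconj E hE).2)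

end KProof

/-- K enjoys ULIP, with interpolants of depth at most d(φ). -/
theorem ulip_K : ULIP TheoryK ∧
    ∀ (φ : Formula) (P Q : Finset ℕ), ∃ θ : Formula,
      IsULInterpolant TheoryK φ P Q θ ∧ θ.depth ≤ φ.depth := by
  constructor
  · intro φ P Q
    obtain ⟨θ, h, _⟩ := KProof.main_interp φ P Q
    exact ⟨θ, h⟩
  · exact KProof.main_interp
end
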